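/- arXiv:2605.18116 — 8 statements merged into one kernel-verified Lean document; each statement's English description precedes it below -/
import Mathlib

section
/- Let K be a field of characteristic zero, let G be a Lie algebra over K, and let a be a Lie ideal of G whose center is zero and such that every K-linear derivation of a is inner (i.e. of the form ad(x) for some x ∈ a). Then G is the internal direct sum of the centralizer C_G(a) = {x ∈ G | [x,a] = 0} and a, and G is isomorphic as a Lie algebra to the product (G/a) × a. -/
section ProdLie

variable (K L₁ L₂ : Type*) [Field K] [LieRing L₁] [LieRing L₂]
  [LieAlgebra K L₁] [LieAlgebra K L₂]

/-- The componentwise bracket on a product. -/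
instance Prod.instBracketProd : Bracket (L₁ × L₂) (L₁ × L₂) :=
  ⟨fun x y => (⁅x.1, y.1⁆, ⁅x.2, y.2⁆)⟩

/-- The product of two Lie rings, with componentwise bracket. -/
instance Prod.instLieRing : LieRing (L₁ × L₂) :=
  { (inferInstance : AddCommGroup (L₁ × L₂)),
    (inferInstance : Bracket (L₁ × L₂) (L₁ × L₂)) with
    add_lie := fun x y z =>
      Prod.ext (add_lie x.1 y.1 z.1) (add_lie x.2 y.2 z.2)
    lie_add := fun x y z =>
      Prod.ext (lie_add x.1 y.1 z.1) (lie_add x.2 y.2 z.2)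
    lie_self := fun x => Prod.ext (lie_self x.1) (lie_self x.2)
    leibniz_lie := fun x y z =>
      Prod.ext (leibniz_lie x.1 y.1 z.1) (leibniz_lie x.2 y.2 z.2) }

/-- The product of two Lie algebras, with componentwise bracket. -/
instance Prod.instLieAlgebraProd : LieAlgebra K (L₁ × L₂) :=
  { (inferInstance : Module K (L₁ × L₂)) with
    lie_smul := fun t x y => Prod.ext (lie_smul t x.1 y.1) (lie_smul t x.2 y.2) }

end ProdLie

section Aux

variable {K G : Type*} [Field K] [LieRing G] [LieAlgebra K G] (a : LieIdeal K G)

/-- The derivation of `a` induced by bracketing with `x : G`. -/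
def adRestrict (x : G) : LieDerivation K a a where
  toFun z := ⟨⁅x, (z : G)⁆, a.lie_mem z.2⟩
  map_add' z w := by ext; simp
  map_smul' t z := by ext; simp
  leibniz' z w := by
    have hco : ∀ u v : a, ((⁅u, v⁆ : a) : G) = ⁅(u : G), (v : G)⁆ := fun _ _ => rfl
    ext
    simp only [LinearMap.coe_mk, AddHom.coe_mk]
    simp only [AddSubgroupClass.coe_sub, hco]
    rw [leibniz_lie, ← lie_skew ((w : G)) (⁅x, (z:G)⁆)]
    abel

@[simp] lemma adRestrict_apply (x : G) (z : a) :
    ((adRestrict a x z : a) : G) = ⁅x, (z : G)⁆ := rfl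

end Aux

/-- If `a` is a Lie ideal of `G` whose center is zero and all of whose
derivations are inner, then `G` is the internal direct sum of the centralizer of `a` and `a`,
and `G ≅ (G ⧸ a) × a` as Lie algebras. -/
theorem lieIdeal_complemented_of_centerless_of_derivations_inner
    (K G : Type*) [Field K] [CharZero K] [LieRing G] [LieAlgebra K G]
    (a : LieIdeal K G)
    (hcenter : LieAlgebra.center K a = ⊥)
    (hinner : ∀ D : LieDerivation K a a, ∃ x : a, D = LieDerivation.ad K a x) :
    (∀ x : G, ∃ c y : G, (∀ z ∈ a, ⁅c, z⁆ = 0) ∧ y ∈ a ∧ x = c + y) ∧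
    (∀ x : G, (∀ z ∈ a, ⁅x, z⁆ = 0) → x ∈ a → x = 0) ∧
    Nonempty (G ≃ₗ⁅K⁆ (G ⧸ a) × a) := by
  classical
  have hco : ∀ u v : a, ((⁅u, v⁆ : a) : G) = ⁅(u : G), (v : G)⁆ := fun _ _ => rfl
  -- zero lemma from trivial center
  have hzero : ∀ w : a, (∀ z : a, ⁅(w : G), (z : G)⁆ = 0) → w = 0 := by
    intro w hw
    have hmem : w ∈ LieAlgebra.center K a := by
      rw [LieModule.mem_maxTrivSubmodule]
      intro z
      have : ((⁅z, w⁆ : a) : G) = 0 := by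
        rw [hco]
        rw [← lie_skew, hw z, neg_zero]
      exact Subtype.ext this
    rw [hcenter] at hmem
    exact hmem
  -- the component map
  set p : G → a := fun x => Classical.choose (hinner (adRestrict a x)) with hp_def
  have hp : ∀ (x : G) (z : a), ⁅x, (z : G)⁆ = ⁅((p x : a) : G), (z : G)⁆ := by
    intro x z
    have h := Classical.choose_spec (hinner (adRestrict a x))
    have h2 := congrArg (fun D : LieDerivation K a a => ((D z : a) : G)) h
    simpa [LieAlgebra.ad_apply] using h2
  have hcent : ∀ (x : G) (z : a), ⁅x - ((p x : a) : G), (z : G)⁆ = 0 := by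
    intro x z
    rw [sub_lie, hp x z, sub_self]
  -- characterization / uniqueness of the component
  have hchar : ∀ (x : G) (y : a), (∀ z : a, ⁅x - (y : G), (z : G)⁆ = 0) → p x = y := by
    intro x y hy
    have : ∀ z : a, ⁅((p x : a) : G) - (y : G), (z : G)⁆ = 0 := by
      intro z
      have h1 := hcent x z
      have h2 := hy z
      have : ⁅(x - (y : G)) - (x - ((p x : a) : G)), (z : G)⁆ = 0 := by
        rw [sub_lie, h1, h2, sub_zero]
      simpa [sub_sub_sub_cancel_left] using this
    have hw : (p x - y : a) = 0 := by
      apply hzero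
      intro z
      simpa using this z
    have := sub_eq_zero.mp hw
    exact this
  refine ⟨?_, ?_, ?_⟩
  · intro x
    refine ⟨x - ((p x : a) : G), ((p x : a) : G), ?_, (p x).2, by abel⟩
    intro z hz
    exact hcent x ⟨z, hz⟩
  · intro x hx hxa
    have : (⟨x, hxa⟩ : a) = 0 := hzero ⟨x, hxa⟩ fun z => hx z z.2
    exact congrArg Subtype.val this
  · -- build the Lie equivalence
    have hPadd : ∀ x y : G, p (x + y) = p x + p y := by
      intro x y
      apply hchar
      intro z
      have : (x + y) - (((p x + p y : a)) : G) = (x - p x) + (y - p y) := by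
        push_cast; abel
      rw [this, add_lie, hcent x z, hcent y z, add_zero]
    have hPsmul : ∀ (t : K) (x : G), p (t • x) = t • p x := by
      intro t x
      apply hchar
      intro z
      have : (t • x) - ((t • p x : a) : G) = t • (x - p x) := by
        push_cast; rw [smul_sub]
      rw [this, smul_lie, hcent x z, smul_zero]
    have hPlie : ∀ x y : G, p ⁅x, y⁆ = ⁅p x, p y⁆ := by
      intro x y
      apply hchar
      intro z
      have key : ⁅x, y⁆ - ((⁅p x, p y⁆ : a) : G) = ⁅x - p x, y - p y⁆
          + ⁅x - ((p x : a) : G), ((p y : a) : G)⁆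
          + ⁅((p x : a) : G), y - ((p y : a) : G)⁆ := by
        rw [hco]
        rw [lie_sub, sub_lie, lie_sub, sub_lie]
        abel
      rw [key, hcent x (p y)]
      have h1 : ⁅((p x : a) : G), y - ((p y : a) : G)⁆ = 0 := by
        rw [← lie_skew, hcent y (p x), neg_zero]
      rw [h1, add_zero, add_zero, lie_lie, hcent x z, lie_zero, sub_zero]
      exact hcent x ⟨⁅y - ((p y : a) : G), (z : G)⁆, a.lie_mem z.2⟩
    -- the Lie algebra homomorphism
    let f : G →ₗ⁅K⁆ (G ⧸ a) × a :=
      { toFun := fun x => (LieSubmodule.Quotient.mk (N := a) x, p x)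
        map_add' := fun x y => by
          simp only [hPadd]
          rfl
        map_smul' := fun t x => by
          simp only [hPsmul]
          rfl
        map_lie' := by
          intro x y
          simp only [hPlie]
          rfl }
    have hinj : Function.Injective f := by
      intro x y hxy
      have h0 : f (x - y) = 0 := by
        rw [map_sub, hxy, sub_self]
      have h1 : LieSubmodule.Quotient.mk (N := a) (x - y) = 0 :=
        congrArg Prod.fst h0
      have h2 : p (x - y) = 0 := congrArg Prod.snd h0
      have hmem : x - y ∈ a := (LieSubmodule.Quotient.mk_eq_zero a).mp h1
      have hc : ∀ z : a, ⁅x - y, (z : G)⁆ = 0 := by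
        intro z
        have := hcent (x - y) z
        rw [h2] at this
        simpa using this
      have : (⟨x - y, hmem⟩ : a) = 0 := hzero ⟨x - y, hmem⟩ fun z => hc z
      have := congrArg Subtype.val this
      simpa [sub_eq_zero] using this
    have hsurj : Function.Surjective f := by
      rintro ⟨q, y⟩
      obtain ⟨x, hx⟩ := LieSubmodule.Quotient.surjective_mk' a q
      refine ⟨x - ((p x : a) : G) + (y : G), ?_⟩
      have h1 : LieSubmodule.Quotient.mk (N := a)
          (x - ((p x : a) : G) + (y : G)) = q := by
        rw [← hx]
        show Submodule.Quotient.mk _ = Submodule.Quotient.mk _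
        refine (Submodule.Quotient.eq a.toSubmodule).mpr ?_
        have h4 : (x - ((p x : a) : G) + (y : G)) - x = (y : G) - ((p x : a) : G) := by abel
        rw [h4]
        exact a.toSubmodule.sub_mem y.2 (p x).2
      have h2 : p (x - ((p x : a) : G) + (y : G)) = y := by
        apply hchar
        intro z
        have : (x - ((p x : a) : G) + (y : G)) - (y : G) = x - ((p x : a) : G) := by abel
        rw [this]
        exact hcent x z
      exact Prod.ext h1 h2
    exact ⟨LieEquiv.ofBijective f ⟨hinj, hsurj⟩⟩
end

section
/- Let K be a field of characteristic zero and let G be a weakly Noetherian Lie algebra over K. Then there is no injective Lie algebra homomorphism from the free Lie algebra over K on two generators into G; equivalently, G contains no nonabelian free Lie subalgebra. -/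
open Polynomial

attribute [local instance 100] LieRing.ofAssociativeRing

section Aux

variable (K : Type*) [Field K]

/-- Multiplication operators on `K[X]`. -/
noncomputable def MuOp : K[X] →ₗ[K] Module.End K K[X] := LinearMap.mul K K[X]

lemma lie_MuOp (p q : K[X]) : ⁅MuOp K p, MuOp K q⁆ = 0 := by
  rw [Ring.lie_def]
  refine LinearMap.ext fun r => ?_
  simp only [MuOp, LinearMap.sub_apply, Module.End.mul_apply, LinearMap.mul_apply',
    LinearMap.zero_apply]
  ring

/-- The operator `X² d/dX` on `K[X]`. -/
noncomputable def DOp : Module.End K K[X] :=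
  (MuOp K (X ^ 2)).comp (derivative : K[X] →ₗ[K] K[X])

lemma lie_DOp_MuOp (p : K[X]) : ⁅DOp K, MuOp K p⁆ = MuOp K (X ^ 2 * derivative p) := by
  rw [Ring.lie_def]
  refine LinearMap.ext fun q => ?_
  simp only [DOp, MuOp, LinearMap.sub_apply, Module.End.mul_apply, LinearMap.mul_apply',
    LinearMap.comp_apply, derivative_mul]
  ring

/-- The abelian subalgebra of multiplication operators. -/
noncomputable def MuSub : LieSubalgebra K (Module.End K K[X]) :=
  { LinearMap.range (MuOp K) with
    lie_mem' := by
      rintro x y ⟨p, rfl⟩ ⟨q, rfl⟩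
      rw [lie_MuOp]
      exact Submodule.zero_mem _ }

lemma mem_MuSub {x : Module.End K K[X]} : x ∈ MuSub K ↔ ∃ p, MuOp K p = x := Iff.rfl

end Aux

section Free

variable (K : Type*) [Field K] [CharZero K]

noncomputable def φF : FreeLieAlgebra K (Fin 2) →ₗ⁅K⁆ Module.End K K[X] :=
  FreeLieAlgebra.lift K ![DOp K, MuOp K X]

noncomputable def εF : ℕ → FreeLieAlgebra K (Fin 2)
  | 0 => FreeLieAlgebra.of K (1 : Fin 2)
  | n + 1 => ⁅FreeLieAlgebra.of K (0 : Fin 2), εF n⁆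

lemma φF_εF (n : ℕ) : φF K (εF K n) = (n.factorial : K) • MuOp K (X ^ (n + 1)) := by
  induction n with
  | zero => simp [φF, εF, FreeLieAlgebra.lift_of_apply, pow_one]
  | succ n ih =>
      have h0 : φF K (εF K (n+1)) = ⁅DOp K, φF K (εF K n)⁆ := by
        show φF K ⁅FreeLieAlgebra.of K (0 : Fin 2), εF K n⁆ = _
        rw [LieHom.map_lie]
        congr 1
        simp [φF, FreeLieAlgebra.lift_of_apply]
      have hsm : ∀ (c : K) (a b : Module.End K K[X]), ⁅a, c • b⁆ = c • ⁅a, b⁆ := by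
        intro c a b
        rw [Ring.lie_def, Ring.lie_def, smul_sub, mul_smul_comm, smul_mul_assoc]
      rw [h0, ih, hsm, lie_DOp_MuOp]
      have hder : (X:K[X]) ^ 2 * derivative ((X:K[X]) ^ (n+1)) = ((n:K) + 1) • X ^ (n + 2) := by
        rw [derivative_X_pow, smul_eq_C_mul]
        push_cast
        ring
      rw [hder, map_smul, smul_smul, Nat.factorial_succ]
      congr 1
      push_cast
      ring

/-- Our favourite subalgebra of the free Lie algebra. -/
noncomputable def mF : LieSubalgebra K (FreeLieAlgebra K (Fin 2)) :=
  (MuSub K).comap (φF K)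

lemma εF_mem (n : ℕ) : εF K n ∈ mF K := by
  show φF K (εF K n) ∈ MuSub K
  rw [φF_εF]
  exact Submodule.smul_mem _ _ (LinearMap.mem_range_self _ _)

end Free

section DerSpan

lemma derivedSeries_one_toSubmodule {K : Type*} [Field K] (M : Type*) [LieRing M]
    [LieAlgebra K M] :
    (LieAlgebra.derivedSeries K M 1).toSubmodule =
      Submodule.span K {z : M | ∃ a b : M, ⁅a, b⁆ = z} := by
  rw [LieAlgebra.derivedSeries_def, LieAlgebra.derivedSeriesOfIdeal_succ,
    LieAlgebra.derivedSeriesOfIdeal_zero, LieSubmodule.lieIdeal_oper_eq_linear_span']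
  congr 1
  ext z
  constructor
  · rintro ⟨a, -, b, -, rfl⟩; exact ⟨a, b, rfl⟩
  · rintro ⟨a, b, rfl⟩; exact ⟨a, trivial, b, trivial, rfl⟩

end DerSpan

section Transfer

variable {K : Type*} [Field K] {L₁ L₂ : Type*} [LieRing L₁] [LieAlgebra K L₁]
  [LieRing L₂] [LieAlgebra K L₂]

lemma fd_of_map (f : L₁ →ₗ⁅K⁆ L₂) (hf : Function.Injective f) (m₀ : LieSubalgebra K L₁)
    (hFD : FiniteDimensional K
      (↥(m₀.map f) ⧸ LieAlgebra.derivedSeries K ↥(m₀.map f) 1)) :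
    FiniteDimensional K (↥m₀ ⧸ LieAlgebra.derivedSeries K ↥m₀ 1) := by
  set m := m₀.map f with hm
  -- the restriction of `f` to a map `m₀ → m`
  have hmem : ∀ x : ↥m₀, f x ∈ m := fun x => (LieSubalgebra.mem_map _ _ _).2 ⟨x, x.2, rfl⟩
  let σ : ↥m₀ →ₗ[K] ↥m :=
    LinearMap.codRestrict m.toSubmodule (f.toLinearMap ∘ₗ (m₀ : Submodule K L₁).subtype) hmem
  have hσ : ∀ x : ↥m₀, (σ x : L₂) = f x := fun x => rfl
  have hσinj : Function.Injective σ := by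
    intro a b h
    exact Subtype.ext (hf (congrArg Subtype.val h))
  have hσlie : ∀ a b : ↥m₀, σ ⁅a, b⁆ = ⁅σ a, σ b⁆ := by
    intro a b
    apply Subtype.ext
    rw [hσ, LieSubalgebra.coe_bracket, LieHom.map_lie]
    rfl
  -- the derived submodules correspond
  have key : (LieAlgebra.derivedSeries K ↥m 1).toSubmodule =
      Submodule.map σ (LieAlgebra.derivedSeries K ↥m₀ 1).toSubmodule := by
    rw [derivedSeries_one_toSubmodule, derivedSeries_one_toSubmodule, Submodule.map_span]
    congr 1
    ext z
    constructor
    · rintro ⟨a, b, rfl⟩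
      obtain ⟨a', ha'⟩ : ∃ a' : ↥m₀, σ a' = a := by
        obtain ⟨x, hx, hfx⟩ := (LieSubalgebra.mem_map _ _ _).1 a.2
        exact ⟨⟨x, hx⟩, Subtype.ext hfx⟩
      obtain ⟨b', hb'⟩ : ∃ b' : ↥m₀, σ b' = b := by
        obtain ⟨x, hx, hfx⟩ := (LieSubalgebra.mem_map _ _ _).1 b.2
        exact ⟨⟨x, hx⟩, Subtype.ext hfx⟩
      exact ⟨⁅a', b'⁆, ⟨a', b', rfl⟩, by rw [hσlie, ha', hb']⟩
    · rintro ⟨-, ⟨a, b, rfl⟩, rfl⟩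
      exact ⟨σ a, σ b, (hσlie a b).symm⟩
  -- lift `mkQ ∘ σ` to the quotient
  let T : ↥m₀ →ₗ[K] (↥m ⧸ LieAlgebra.derivedSeries K ↥m 1) :=
    (LieAlgebra.derivedSeries K ↥m 1).toSubmodule.mkQ ∘ₗ σ
  have hTmem : ∀ x : ↥m₀, T x = 0 ↔ σ x ∈ (LieAlgebra.derivedSeries K ↥m 1).toSubmodule := by
    intro x
    exact Submodule.Quotient.mk_eq_zero _
  have hker : (LieAlgebra.derivedSeries K ↥m₀ 1).toSubmodule ≤ LinearMap.ker T := by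
    intro x hx
    rw [LinearMap.mem_ker, hTmem, key]
    exact Submodule.mem_map_of_mem hx
  have hker' : LinearMap.ker T ≤ (LieAlgebra.derivedSeries K ↥m₀ 1).toSubmodule := by
    intro x hx
    rw [LinearMap.mem_ker, hTmem, key] at hx
    obtain ⟨y, hy, hyx⟩ := hx
    rwa [← hσinj hyx]
  let Tbar := Submodule.liftQ (LieAlgebra.derivedSeries K ↥m₀ 1).toSubmodule T hker
  have hinj : Function.Injective Tbar :=
    LinearMap.ker_eq_bot.1 (Submodule.ker_liftQ_eq_bot _ _ hker hker')
  exact FiniteDimensional.of_injective Tbar hinj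

end Transfer

section NoFD

variable (K : Type*) [Field K] [CharZero K]

lemma X_pow_li : LinearIndependent K (fun n : ℕ => (X : K[X]) ^ (n + 1)) := by
  rw [linearIndependent_iff']
  intro s g h i hi
  have := congrArg (fun p => Polynomial.coeff p (i + 1)) h
  simp only [Polynomial.finset_sum_coeff, Polynomial.coeff_smul, Polynomial.coeff_X_pow,
    Polynomial.coeff_zero, smul_eq_mul, mul_ite, mul_one, mul_zero,
    Finset.sum_ite_eq' s, hi, if_pos] at this
  exact (show i ∈ s → g i = 0 by simpa using this) hi


lemma X_pow_li' : LinearIndependent K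
    (fun n : ℕ => ((n.factorial : K) • (X : K[X]) ^ (n + 1))) := by
  rw [linearIndependent_iff']
  intro s g h i hi
  have := congrArg (fun p => Polynomial.coeff p (i + 1)) h
  simp only [Polynomial.finset_sum_coeff, Polynomial.coeff_smul, Polynomial.coeff_X_pow,
    Polynomial.coeff_zero, smul_eq_mul, mul_ite, mul_one, mul_zero,
    Finset.sum_ite_eq' s, hi, if_pos] at this
  have h2 : i ∈ s → g i * (i.factorial : K) = 0 := by simpa using this
  have h3 := h2 hi
  have hne : (i.factorial : K) ≠ 0 := Nat.cast_ne_zero.2 i.factorial_ne_zero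
  exact (mul_eq_zero.1 h3).resolve_right hne

set_option maxHeartbeats 1000000 in
lemma mF_not_fd :
    ¬ FiniteDimensional K (↥(mF K) ⧸ LieAlgebra.derivedSeries K ↥(mF K) 1) := by
  intro hFD
  -- the restriction of φF to mF, which kills brackets
  let ψ : ↥(mF K) →ₗ[K] Module.End K K[X] :=
    (φF K).toLinearMap ∘ₗ (mF K).toSubmodule.subtype
  have hbr : ∀ a b : ↥(mF K), ψ ⁅a, b⁆ = 0 := by
    intro a b
    have ha : φF K (a : FreeLieAlgebra K (Fin 2)) ∈ MuSub K := a.2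
    have hb : φF K (b : FreeLieAlgebra K (Fin 2)) ∈ MuSub K := b.2
    obtain ⟨p, hp⟩ := (mem_MuSub K).1 ha
    obtain ⟨q, hq⟩ := (mem_MuSub K).1 hb
    show φF K ((⁅a, b⁆ : ↥(mF K)) : FreeLieAlgebra K (Fin 2)) = 0
    rw [LieSubalgebra.coe_bracket, LieHom.map_lie, ← hp, ← hq, lie_MuOp]
  have hker : (LieAlgebra.derivedSeries K ↥(mF K) 1).toSubmodule ≤ LinearMap.ker ψ := by
    rw [derivedSeries_one_toSubmodule, Submodule.span_le]
    rintro z ⟨a, b, rfl⟩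
    exact hbr a b
  let ψbar : (↥(mF K) ⧸ LieAlgebra.derivedSeries K ↥(mF K) 1) →ₗ[K] Module.End K K[X] :=
    Submodule.liftQ (LieAlgebra.derivedSeries K ↥(mF K) 1).toSubmodule ψ hker
  let e : (↥(mF K) ⧸ LieAlgebra.derivedSeries K ↥(mF K) 1) →ₗ[K] K[X] :=
    (LinearMap.applyₗ (1 : K[X])) ∘ₗ ψbar
  let u : ℕ → (↥(mF K) ⧸ LieAlgebra.derivedSeries K ↥(mF K) 1) :=
    fun n => Submodule.Quotient.mk ⟨εF K n, εF_mem K n⟩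
  have hcomp : (⇑e ∘ u) = fun n : ℕ => ((n.factorial : K) • (X : K[X]) ^ (n + 1)) := by
    funext n
    have h1 : ψbar (u n) = φF K (εF K n) := Submodule.liftQ_apply _ ψ _
    show e (u n) = _
    rw [show e (u n) = ψbar (u n) 1 from rfl, h1, φF_εF]
    simp [MuOp, LinearMap.mul_apply']
  have huli : LinearIndependent K u := LinearIndependent.of_comp e (hcomp ▸ X_pow_li' K)
  exact Module.Finite.not_linearIndependent_of_infinite u huli


end NoFD

/-- A Lie algebra is weakly Noetherian if `m/[m,m]` is finite dimensional over `K` for every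
Lie subalgebra `m`. -/
def WeaklyNoetherian (K G : Type*) [Field K] [LieRing G] [LieAlgebra K G] : Prop :=
  ∀ m : LieSubalgebra K G,
    FiniteDimensional K (↥m ⧸ LieAlgebra.derivedSeries K ↥m 1)

/-- A weakly Noetherian Lie algebra over a field of characteristic zero
contains no nonabelian free Lie subalgebra: there is no injective Lie algebra homomorphism
from the free Lie algebra on two generators into `G`. -/
theorem weaklyNoetherian_no_free_subalgebra
    (K G : Type*) [Field K] [CharZero K] [LieRing G] [LieAlgebra K G]
    (hG : WeaklyNoetherian K G) :
    ¬ ∃ f : FreeLieAlgebra K (Fin 2) →ₗ⁅K⁆ G, Function.Injective f := by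
  rintro ⟨f, hf⟩
  exact mF_not_fd K (fd_of_map f hf (mF K) (hG ((mF K).map f)))
end

section
/- Let K be a field of characteristic zero, let G' be a Lie algebra over K, and let G ⊆ G' be a Lie subalgebra of finite codimension (i.e. the quotient vector space G'/G is finite-dimensional over K). If G is weakly Noetherian, then G' is weakly Noetherian. -/
/-- If `G` is a Lie subalgebra of finite codimension of `G'` and `G` is
weakly Noetherian, then `G'` is weakly Noetherian. -/
theorem weaklyNoetherian_of_finite_codim_subalgebra
    (K G' : Type*) [Field K] [CharZero K] [LieRing G'] [LieAlgebra K G']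
    (G : LieSubalgebra K G')
    (hcodim : FiniteDimensional K (G' ⧸ G.toSubmodule))
    (hG : WeaklyNoetherian K G) :
    WeaklyNoetherian K G' := by
  intro m
  -- intersection as a submodule of m
  set N : Submodule K ↥m := G.toSubmodule.comap m.toSubmodule.subtype with hN
  -- intersection as a Lie subalgebra of G
  set p : LieSubalgebra K ↥G := m.comap G.incl with hp
  -- linear iso between p and N
  let e : ↥p ≃ₗ[K] ↥N :=
    { toFun := fun x => ⟨⟨(x : ↥G), x.2⟩, (x : ↥G).2⟩
      invFun := fun y => ⟨⟨((y : ↥m) : G'), y.2⟩, ((y : ↥m)).2⟩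
      left_inv := fun x => by ext; rfl
      right_inv := fun y => by ext; rfl
      map_add' := fun x y => by ext; rfl
      map_smul' := fun c x => by ext; rfl }
  set S : Submodule K ↥m :=
    Submodule.span K {x : ↥m | ∃ a ∈ N, ∃ b ∈ N, x = ⁅a, b⁆} with hS
  have hSN : S ≤ N := by
    rw [Submodule.span_le]
    rintro x ⟨a, ha, b, hb, rfl⟩
    show ((⁅a, b⁆ : ↥m) : G') ∈ G
    rw [LieSubalgebra.coe_bracket]
    exact G.lie_mem ha hb
  have hSD : S ≤ (LieAlgebra.derivedSeries K ↥m 1).toSubmodule := by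
    rw [Submodule.span_le]
    rintro x ⟨a, ha, b, hb, rfl⟩
    show (⁅a, b⁆ : ↥m) ∈ LieAlgebra.derivedSeries K ↥m 1
    rw [LieAlgebra.derivedSeries_def, LieAlgebra.derivedSeriesOfIdeal_succ,
      LieAlgebra.derivedSeriesOfIdeal_zero]
    exact LieSubmodule.lie_mem_lie (LieSubmodule.mem_top a) (LieSubmodule.mem_top b)
  -- m / N is finite dimensional
  have hmN : FiniteDimensional K (↥m ⧸ N) := by
    have hker : N ≤ LinearMap.ker (G.toSubmodule.mkQ ∘ₗ m.toSubmodule.subtype) := by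
      intro x hx
      simp only [LinearMap.mem_ker, LinearMap.comp_apply, Submodule.mkQ_apply,
        Submodule.Quotient.mk_eq_zero]
      exact hx
    exact FiniteDimensional.of_injective
      (N.liftQ (G.toSubmodule.mkQ ∘ₗ m.toSubmodule.subtype) hker)
      (by
        rw [← LinearMap.ker_eq_bot]
        apply Submodule.ker_liftQ_eq_bot
        intro x hx
        simp at hx; exact hx)
  -- N / S' is finite dimensional, where S' is S restricted to N
  set S' : Submodule K ↥N := S.comap N.subtype with hS'
  have hNS' : FiniteDimensional K (↥N ⧸ S') := by
    have hfin := hG p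
    set q : ↥p →ₗ[K] ↥N ⧸ S' := S'.mkQ ∘ₗ (e : ↥p →ₗ[K] ↥N) with hq
    have hker : (LieAlgebra.derivedSeries K ↥p 1).toSubmodule ≤ LinearMap.ker q := by
      rw [LieAlgebra.derivedSeries_def, LieAlgebra.derivedSeriesOfIdeal_succ,
        LieAlgebra.derivedSeriesOfIdeal_zero, LieSubmodule.lieIdeal_oper_eq_linear_span,
        Submodule.span_le]
      rintro x ⟨a, b, rfl⟩
      simp only [SetLike.mem_coe, LinearMap.mem_ker, hq, LinearMap.comp_apply,
        Submodule.mkQ_apply, Submodule.Quotient.mk_eq_zero]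
      show (e ⁅(a : ↥p), (b : ↥p)⁆ : ↥N) ∈ S'
      have : (N.subtype (e ⁅(a : ↥p), (b : ↥p)⁆) : ↥m) = ⁅N.subtype (e a), N.subtype (e b)⁆ :=
        Subtype.ext rfl
      show N.subtype (e ⁅(a : ↥p), (b : ↥p)⁆) ∈ S
      rw [this]
      exact Submodule.subset_span ⟨_, (e a).2, _, (e b).2, rfl⟩
    have hsurj : Function.Surjective
        ((LieAlgebra.derivedSeries K ↥p 1).toSubmodule.liftQ q hker) := by
      intro y
      obtain ⟨n, rfl⟩ := S'.mkQ_surjective y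
      refine ⟨Submodule.Quotient.mk (e.symm n), ?_⟩
      have h1 : q (e.symm n) = S'.mkQ n := by
        rw [hq]
        exact congrArg S'.mkQ (e.apply_symm_apply n)
      simpa using h1
    exact Module.Finite.of_surjective _ hsurj
  -- m / S is finite dimensional
  have hmS : FiniteDimensional K (↥m ⧸ S) := by
    have hV : IsNoetherian K (↥m ⧸ S) := by
      rw [isNoetherian_iff_submodule_quotient (N.map S.mkQ)]
      refine ⟨IsNoetherian.iff_fg.mpr ?_, IsNoetherian.iff_fg.mpr ?_⟩
      · have hker2 : S' ≤ LinearMap.ker (S.mkQ ∘ₗ N.subtype) := by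
          intro x hx
          simp only [LinearMap.mem_ker, LinearMap.comp_apply, Submodule.mkQ_apply,
            Submodule.Quotient.mk_eq_zero]
          exact hx
        have hrange : LinearMap.range (S'.liftQ (S.mkQ ∘ₗ N.subtype) hker2) = N.map S.mkQ := by
          rw [Submodule.range_liftQ, LinearMap.range_comp, Submodule.range_subtype]
        have := LinearMap.finiteDimensional_range (S'.liftQ (S.mkQ ∘ₗ N.subtype) hker2)
        rwa [hrange] at this
      · exact (Submodule.quotientQuotientEquivQuotient S N hSN).symm.finiteDimensional
    exact IsNoetherian.iff_fg.mp hV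
  -- conclude by surjecting m / S onto m / [m,m]
  have hker3 : S ≤ LinearMap.ker (LieAlgebra.derivedSeries K ↥m 1).toSubmodule.mkQ := by
    rw [Submodule.ker_mkQ]; exact hSD
  have hsurj : Function.Surjective
      (S.liftQ (LieAlgebra.derivedSeries K ↥m 1).toSubmodule.mkQ hker3) := by
    intro y
    obtain ⟨n, rfl⟩ := (LieAlgebra.derivedSeries K ↥m 1).toSubmodule.mkQ_surjective y
    exact ⟨Submodule.Quotient.mk n, by simp⟩
  exact Module.Finite.of_surjective _ hsurj
end

section
/- Let K be a field of characteristic zero and let G be a weakly Noetherian Lie algebra over K. Then for every k ≥ 1 the k-th term D^k G of the derived series of G has finite codimension in G (the quotient vector space G/D^k G is finite-dimensional over K). In particular, if G is solvable, then G is finite-dimensional over K. -/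
private theorem fd_ext {K V : Type*} [Field K] [AddCommGroup V] [Module K V] (S : Submodule K V)
    [FiniteDimensional K S] [FiniteDimensional K (V ⧸ S)] : FiniteDimensional K V := by
  have h := rank_quotient_add_rank_of_divisionRing S
  have : Module.rank K V < Cardinal.aleph0 := by
    rw [← h]
    exact Cardinal.add_lt_aleph0 (Module.rank_lt_aleph0 K _) (Module.rank_lt_aleph0 K _)
  exact Module.rank_lt_aleph0_iff.mp this

private theorem step (K G : Type*) [Field K] [LieRing G] [LieAlgebra K G]
    (hG : WeaklyNoetherian K G) (I : LieIdeal K G)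
    (hI : FiniteDimensional K (G ⧸ I)) :
    FiniteDimensional K (G ⧸ (⁅I, I⁆ : LieIdeal K G)) := by
  set J : LieIdeal K G := ⁅I, I⁆ with hJ
  set A : Submodule K G := J.toSubmodule with hA
  set B : Submodule K G := I.toSubmodule with hB
  have hAB : A ≤ B := LieSubmodule.lie_le_left I I
  have h1 : FiniteDimensional K (↥I ⧸ LieAlgebra.derivedSeries K ↥I 1) := hG I
  -- the natural map from ↥I to G ⧸ A
  let f : ↥B →ₗ[K] G ⧸ A := A.mkQ.comp B.subtype
  have hker : (LieAlgebra.derivedSeries K ↥I 1).toSubmodule ≤ LinearMap.ker f := by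
    intro x hx
    rw [LieSubmodule.mem_toSubmodule,
      LieIdeal.derivedSeries_eq_derivedSeriesOfIdeal_comap] at hx
    rw [LieIdeal.mem_comap] at hx
    have : (x : G) ∈ A := by
      simpa [hA, hJ, LieAlgebra.derivedSeriesOfIdeal_succ, LieAlgebra.derivedSeriesOfIdeal_zero]
        using hx
    simp only [f, LinearMap.mem_ker, LinearMap.comp_apply, Submodule.mkQ_apply,
      Submodule.Quotient.mk_eq_zero]
    exact this
  let g : (↥I ⧸ LieAlgebra.derivedSeries K ↥I 1) →ₗ[K] G ⧸ A :=
    Submodule.liftQ _ f hker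
  have hg : LinearMap.range g = B.map A.mkQ := by
    have h2 : LinearMap.range g = LinearMap.range f := by
      apply le_antisymm
      · rintro y ⟨x, rfl⟩
        obtain ⟨z, rfl⟩ := Submodule.Quotient.mk_surjective _ x
        exact ⟨z, rfl⟩
      · rintro y ⟨x, rfl⟩
        exact ⟨Submodule.Quotient.mk x, rfl⟩
    rw [h2]
    simp [f, LinearMap.range_comp, Submodule.range_subtype]
  have hfin : FiniteDimensional K (B.map A.mkQ) := by
    rw [← hg]; infer_instance
  have hquot : FiniteDimensional K ((G ⧸ A) ⧸ B.map A.mkQ) := by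
    have e := Submodule.quotientQuotientEquivQuotient A B hAB
    exact e.symm.finiteDimensional
  exact fd_ext (B.map A.mkQ)

/-- In a weakly Noetherian Lie algebra, every term `D^k G` (`k ≥ 1`) of the
derived series has finite codimension; in particular a solvable weakly Noetherian Lie algebra
is finite dimensional. -/
theorem weaklyNoetherian_derivedSeries_finite_codim
    (K G : Type*) [Field K] [CharZero K] [LieRing G] [LieAlgebra K G]
    (hG : WeaklyNoetherian K G) :
    (∀ k : ℕ, 1 ≤ k → FiniteDimensional K (G ⧸ LieAlgebra.derivedSeries K G k)) ∧
    (LieAlgebra.IsSolvable G → FiniteDimensional K G) := by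
  have main : ∀ k : ℕ, FiniteDimensional K (G ⧸ LieAlgebra.derivedSeries K G k) := by
    intro k
    induction k with
    | zero =>
      have h : LieAlgebra.derivedSeries K G 0 = ⊤ := LieAlgebra.derivedSeriesOfIdeal_zero K G ⊤
      rw [h]
      have : Subsingleton (G ⧸ (⊤ : LieIdeal K G)) := by
        constructor
        intro a b
        obtain ⟨x, rfl⟩ := Submodule.Quotient.mk_surjective _ a
        obtain ⟨y, rfl⟩ := Submodule.Quotient.mk_surjective _ b
        rw [Submodule.Quotient.eq]
        exact trivial
      exact Module.Finite.of_basis (Module.Basis.empty _ (ι := Fin 0))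
    | succ k ih =>
      have h : LieAlgebra.derivedSeries K G (k + 1) =
          ⁅LieAlgebra.derivedSeries K G k, LieAlgebra.derivedSeries K G k⁆ :=
        LieAlgebra.derivedSeriesOfIdeal_succ K G ⊤ k
      rw [h]
      exact step K G hG _ ih
  refine ⟨fun k _ => main k, fun hs => ?_⟩
  obtain ⟨k, hk⟩ := (LieAlgebra.isSolvable_iff K G).mp hs
  have := main k
  rw [hk] at this
  exact (Submodule.quotEquivOfEqBot (⊥ : LieIdeal K G).toSubmodule
    (LieSubmodule.bot_toSubmodule)).finiteDimensional
end

section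
/- Let K be a field of characteristic zero and let G be a weakly Noetherian Lie algebra over K. Then every ascending chain m₁ ⊆ m₂ ⊆ m₃ ⊆ ⋯ of finite-dimensional Lie ideals of G stabilizes: there is an index N with m_k = m_N for all k ≥ N. -/
open Module Submodule

section Aux

variable {K G : Type*} [Field K] [LieRing G] [LieAlgebra K G]

private lemma nat_max_of_bounded (f : ℕ → ℕ) :
    ∀ C : ℕ, (∀ k, f k ≤ C) → ∃ N, ∀ k, f k ≤ f N := by
  intro C
  induction C with
  | zero => exact fun h => ⟨0, fun k => (h k).trans (Nat.zero_le _)⟩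
  | succ C ih =>
    intro h
    by_cases hC : ∃ N, f N = C + 1
    · obtain ⟨N, hN⟩ := hC
      exact ⟨N, fun k => hN ▸ h k⟩
    · push_neg at hC
      exact ih fun k => Nat.lt_succ_iff.mp (lt_of_le_of_ne (h k) (hC k))

private lemma step_lemma (m : ℕ → LieIdeal K G) (hmono : Monotone m)
    (hfd : ∀ k, FiniteDimensional K ↥(m k))
    (hub : ∀ C : ℕ, ∃ L : ℕ, C < finrank K ↥((m L : Submodule K G)))
    (J : ℕ) (F : Finset G) (hF : ∀ y ∈ F, y ∈ m J) :
    ∃ p : ℕ × G, J ≤ p.1 ∧ p.2 ∈ m p.1 ∧ p.2 ∉ span K (F : Set G) ∧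
      ∀ y ∈ F, ⁅y, p.2⁆ = 0 := by
  classical
  set n := F.card with hn
  haveI : ∀ k, FiniteDimensional K ↥((m k : Submodule K G)) := fun k => hfd k
  set w := finrank K ↥((m J : Submodule K G)) with hw
  obtain ⟨L₀, hL₀⟩ := hub (n * w + n)
  set L := max L₀ J with hL
  have hJL : J ≤ L := le_max_right _ _
  have hLsub : (m L₀ : Submodule K G) ≤ (m L : Submodule K G) :=
    (LieSubmodule.toSubmodule_le_toSubmodule _ _).mpr (hmono (le_max_left _ _))
  have hbig : n * w + n < finrank K ↥((m L : Submodule K G)) :=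
    lt_of_lt_of_le hL₀ (Submodule.finrank_mono hLsub)
  -- the linear map recording brackets with elements of `F`
  set V : Submodule K G := (m L : Submodule K G) with hV
  set W : Submodule K G := (m J : Submodule K G) with hWdef
  have hmemW : ∀ (y : F) (v : V), ⁅(y : G), (v : G)⁆ ∈ W := by
    intro y v
    have h1 : ⁅(v : G), (y : G)⁆ ∈ m J := (m J).lie_mem (hF y y.2)
    rw [← lie_skew]
    exact neg_mem h1
  set φ : V →ₗ[K] (F → W) := LinearMap.pi fun y : F =>
    LinearMap.codRestrict W ((LieAlgebra.ad K G (y : G)).comp V.subtype)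
      (fun v => hmemW y v) with hφ
  have hcodom : finrank K (F → W) = n * w := by
    rw [Module.finrank_pi_fintype, Finset.sum_const, smul_eq_mul, Finset.card_univ, Fintype.card_coe]
  have hrange : finrank K ↥(LinearMap.range φ) ≤ n * w := hcodom ▸ (LinearMap.range φ).finrank_le
  have hrn := LinearMap.finrank_range_add_finrank_ker φ
  have hker : n < finrank K ↥(LinearMap.ker φ) := by omega
  set U : Submodule K G := (LinearMap.ker φ).map V.subtype with hU
  have hUrank : finrank K ↥U = finrank K ↥(LinearMap.ker φ) :=
    Submodule.finrank_map_subtype_eq V (LinearMap.ker φ)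
  have hspan : finrank K ↥(span K (F : Set G)) ≤ n := finrank_span_finset_le_card F
  have hnot : ¬ U ≤ span K (F : Set G) := by
    intro hle
    have := Submodule.finrank_mono hle
    omega
  obtain ⟨x, hxU, hxnot⟩ := SetLike.not_le_iff_exists.mp hnot
  obtain ⟨v, hv, rfl⟩ := Submodule.mem_map.mp hxU
  refine ⟨(L, (v : G)), hJL, v.2, hxnot, ?_⟩
  intro y hy
  have h0 : φ v = 0 := LinearMap.mem_ker.mp hv
  have h1 : (φ v ⟨y, hy⟩ : G) = 0 := by rw [h0]; rfl
  exact h1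

end Aux

section Construction

variable {K G : Type*} [Field K] [LieRing G] [LieAlgebra K G]

attribute [local instance] Classical.decEq

variable (m : ℕ → LieIdeal K G)

private def GoodState : Type _ :=
  {p : Finset G × ℕ // ∀ y ∈ p.1, y ∈ m p.2}

variable (hmono : Monotone m) (hfd : ∀ k, FiniteDimensional K ↥(m k))
  (hub : ∀ C : ℕ, ∃ L : ℕ, C < finrank K ↥((m L : Submodule K G)))

private noncomputable def pick (s : GoodState m) : ℕ × G :=
  (step_lemma m hmono hfd hub s.1.2 s.1.1 s.2).choose

private lemma pick_spec (s : GoodState m) :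
    s.1.2 ≤ (pick m hmono hfd hub s).1 ∧
      (pick m hmono hfd hub s).2 ∈ m (pick m hmono hfd hub s).1 ∧
      (pick m hmono hfd hub s).2 ∉ span K ((s.1.1 : Finset G) : Set G) ∧
      ∀ y ∈ s.1.1, ⁅y, (pick m hmono hfd hub s).2⁆ = 0 :=
  (step_lemma m hmono hfd hub s.1.2 s.1.1 s.2).choose_spec

private noncomputable def nextState (s : GoodState m) : GoodState m :=
  ⟨(insert (pick m hmono hfd hub s).2 s.1.1, (pick m hmono hfd hub s).1), by
    intro y hy
    rcases Finset.mem_insert.mp hy with h | h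
    · exact h ▸ (pick_spec m hmono hfd hub s).2.1
    · exact hmono (pick_spec m hmono hfd hub s).1 (s.2 y h)⟩

private noncomputable def st (n : ℕ) : GoodState m :=
  (nextState m hmono hfd hub)^[n] ⟨(∅, 0), by simp⟩

private noncomputable def xseq (n : ℕ) : G :=
  (pick m hmono hfd hub (st m hmono hfd hub n)).2

private lemma st_succ (n : ℕ) :
    st m hmono hfd hub (n + 1) = nextState m hmono hfd hub (st m hmono hfd hub n) :=
  Function.iterate_succ_apply' _ _ _

private lemma st_fst_succ (n : ℕ) :
    (st m hmono hfd hub (n + 1)).1.1 =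
      insert (xseq m hmono hfd hub n) (st m hmono hfd hub n).1.1 := by
  rw [st_succ]; rfl

private lemma st_zero : (st m hmono hfd hub 0).1.1 = ∅ := rfl

private lemma xseq_mem_st {i n : ℕ} (h : i < n) :
    xseq m hmono hfd hub i ∈ (st m hmono hfd hub n).1.1 := by
  induction n with
  | zero => omega
  | succ n ih =>
    rw [st_fst_succ]
    rcases Nat.lt_succ_iff_lt_or_eq.mp h with h' | h'
    · exact Finset.mem_insert_of_mem (ih h')
    · rw [h']; exact Finset.mem_insert_self _ _

private lemma xseq_not_mem (n : ℕ) :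
    xseq m hmono hfd hub n ∉
      span K (((st m hmono hfd hub n).1.1 : Finset G) : Set G) :=
  (pick_spec m hmono hfd hub (st m hmono hfd hub n)).2.2.1

private lemma xseq_comm' {y : G} {n : ℕ} (h : y ∈ (st m hmono hfd hub n).1.1) :
    ⁅y, xseq m hmono hfd hub n⁆ = 0 :=
  (pick_spec m hmono hfd hub (st m hmono hfd hub n)).2.2.2 _ h

private lemma xseq_comm (i j : ℕ) :
    ⁅xseq m hmono hfd hub i, xseq m hmono hfd hub j⁆ = 0 := by
  rcases lt_trichotomy i j with h | h | h
  · exact xseq_comm' m hmono hfd hub (xseq_mem_st m hmono hfd hub h)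
  · rw [h]; exact lie_self _
  · have h0 : ⁅xseq m hmono hfd hub j, xseq m hmono hfd hub i⁆ = 0 :=
      xseq_comm' m hmono hfd hub (xseq_mem_st m hmono hfd hub h)
    rw [← lie_skew, h0, neg_zero]

private lemma st_subset_range (n : ℕ) :
    (((st m hmono hfd hub n).1.1 : Finset G) : Set G) ⊆
      Set.range (xseq m hmono hfd hub) := by
  induction n with
  | zero => rw [st_zero]; simp
  | succ n ih =>
    rw [st_fst_succ, Finset.coe_insert]
    intro y hy
    rcases Set.mem_insert_iff.mp hy with h | h
    · exact ⟨n, h.symm⟩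
    · exact ih h

end Construction

section Main

variable {K G : Type*} [Field K] [LieRing G] [LieAlgebra K G]

private lemma exists_infinite_abelian (m : ℕ → LieIdeal K G) (hmono : Monotone m)
    (hfd : ∀ k, FiniteDimensional K ↥(m k))
    (hub : ∀ C : ℕ, ∃ L : ℕ, C < finrank K ↥((m L : Submodule K G))) :
    ∃ A : LieSubalgebra K G, (∀ a ∈ A, ∀ b ∈ A, ⁅a, b⁆ = (0 : G)) ∧
      ¬ FiniteDimensional K ↥A := by
  classical
  set x : ℕ → G := xseq m hmono hfd hub with hx
  set S : Submodule K G := span K (Set.range x) with hS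
  have hz1 : ∀ i : ℕ, ∀ b ∈ S, ⁅x i, b⁆ = 0 := by
    intro i b hb
    induction hb using Submodule.span_induction with
    | mem b hb => obtain ⟨j, rfl⟩ := hb; exact xseq_comm m hmono hfd hub i j
    | zero => exact lie_zero _
    | add u v hu hv hu' hv' => rw [lie_add, hu', hv', add_zero]
    | smul a u hu hu' => rw [lie_smul, hu', smul_zero]
  have hz : ∀ a ∈ S, ∀ b ∈ S, ⁅a, b⁆ = 0 := by
    intro a ha b hb
    induction ha using Submodule.span_induction with
    | mem a ha => obtain ⟨i, rfl⟩ := ha; exact hz1 i b hb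
    | zero => exact zero_lie _
    | add u v hu hv hu' hv' => rw [add_lie, hu', hv', add_zero]
    | smul c u hu hu' => rw [smul_lie, hu', smul_zero]
  refine ⟨{ toSubmodule := S,
            lie_mem' := fun {a b} ha hb => by
              have h0 : ⁅a, b⁆ = 0 := hz a ha b hb
              rw [h0]; exact S.zero_mem }, ?_, ?_⟩
  · exact fun a ha b hb => hz a ha b hb
  · intro hfin
    have hfin' : FiniteDimensional K ↥S := hfin
    have hWle : ∀ n : ℕ,
        span K (((st m hmono hfd hub n).1.1 : Finset G) : Set G) ≤ S :=
      fun n => span_mono (st_subset_range m hmono hfd hub n)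
    have hlt : ∀ n : ℕ,
        span K (((st m hmono hfd hub n).1.1 : Finset G) : Set G) <
          span K (((st m hmono hfd hub (n + 1)).1.1 : Finset G) : Set G) := by
      intro n
      have hle : span K (((st m hmono hfd hub n).1.1 : Finset G) : Set G) ≤
          span K (((st m hmono hfd hub (n + 1)).1.1 : Finset G) : Set G) := by
        apply span_mono
        rw [st_fst_succ, Finset.coe_insert]
        exact Set.subset_insert _ _
      refine lt_of_le_of_ne hle fun he => ?_
      have hmem : x n ∈
          span K (((st m hmono hfd hub (n + 1)).1.1 : Finset G) : Set G) := by
        apply subset_span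
        rw [st_fst_succ, Finset.coe_insert]
        exact Set.mem_insert _ _
      rw [← he] at hmem
      exact xseq_not_mem m hmono hfd hub n hmem
    have hgr : ∀ n : ℕ,
        n ≤ finrank K ↥(span K (((st m hmono hfd hub n).1.1 : Finset G) : Set G)) := by
      intro n
      induction n with
      | zero => exact Nat.zero_le _
      | succ n ih =>
        have := Submodule.finrank_lt_finrank_of_lt (hlt n)
        omega
    have hfr : ∀ n : ℕ,
        finrank K ↥(span K (((st m hmono hfd hub n).1.1 : Finset G) : Set G)) ≤
          finrank K ↥S :=
      fun n => Submodule.finrank_mono (hWle n)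
    have h1 := hgr (finrank K ↥S + 1)
    have h2 := hfr (finrank K ↥S + 1)
    omega

end Main

/-- In a weakly Noetherian Lie algebra, every ascending chain of
finite-dimensional Lie ideals stabilizes. -/
theorem weaklyNoetherian_chain_of_finiteDimensional_ideals_stabilizes
    (K G : Type*) [Field K] [CharZero K] [LieRing G] [LieAlgebra K G]
    (hG : WeaklyNoetherian K G)
    (m : ℕ → LieIdeal K G) (hmono : Monotone m)
    (hfd : ∀ k, FiniteDimensional K (m k)) :
    ∃ N, ∀ k, N ≤ k → m k = m N := by
  classical
  by_cases hb : ∃ C : ℕ, ∀ k, finrank K ↥((m k : Submodule K G)) ≤ C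
  · obtain ⟨C, hC⟩ := hb
    obtain ⟨N, hN⟩ :=
      nat_max_of_bounded (fun k => finrank K ↥((m k : Submodule K G))) C hC
    refine ⟨N, fun k hk => ?_⟩
    haveI : FiniteDimensional K ↥((m k : Submodule K G)) := hfd k
    have hle : (m N : Submodule K G) ≤ (m k : Submodule K G) :=
      (LieSubmodule.toSubmodule_le_toSubmodule _ _).mpr (hmono hk)
    have heq : (m N : Submodule K G) = (m k : Submodule K G) :=
      Submodule.eq_of_le_of_finrank_le hle (hN k)
    exact ((LieSubmodule.toSubmodule_inj _ _).mp heq).symm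
  · exfalso
    push_neg at hb
    have hub : ∀ C : ℕ, ∃ L : ℕ, C < finrank K ↥((m L : Submodule K G)) := hb
    obtain ⟨A, habel, hinf⟩ := exists_infinite_abelian m hmono hfd hub
    have habelian : IsLieAbelian ↥A := by
      constructor
      intro a b
      apply Subtype.ext
      rw [LieSubalgebra.coe_bracket, ZeroMemClass.coe_zero]
      exact habel a a.2 b b.2
    have hd : LieAlgebra.derivedSeries K ↥A 1 = ⊥ := by
      rw [LieAlgebra.derivedSeries_def,
        ← LieAlgebra.abelian_iff_derived_one_eq_bot]
      exact (lie_abelian_iff_equiv_lie_abelian LieIdeal.topEquiv).mpr habelian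
    haveI hQ := hG A
    have hbot : (LieAlgebra.derivedSeries K ↥A 1).toSubmodule = (⊥ : Submodule K ↥A) := by
      rw [hd]
      exact LieSubmodule.bot_toSubmodule
    have e : (↥A ⧸ LieAlgebra.derivedSeries K ↥A 1) ≃ₗ[K] ↥A :=
      Submodule.quotEquivOfEqBot _ hbot
    exact hinf (Module.Finite.equiv e)
end

section
/- Let K be a field of characteristic zero, let G be a weakly Noetherian Lie algebra over K, and let I be a K-linear subspace of the centroid Cent(G) such that θ ∘ θ' = 0 for all θ, θ' ∈ I. Then I is finite-dimensional over K. -/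
set_option maxHeartbeats 1000000
set_option synthInstance.maxHeartbeats 400000

/-- Let `G` be a weakly Noetherian Lie algebra and let `I` be a `K`-linear
subspace of the centroid of `G` (the space of linear endomorphisms `θ` with
`θ ⁅x, y⁆ = ⁅x, θ y⁆`) such that `θ ∘ θ' = 0` for all `θ, θ' ∈ I`. Then `I` is finite
dimensional. -/
theorem weaklyNoetherian_square_zero_subspace_of_centroid_finiteDimensional
    (K G : Type*) [Field K] [CharZero K] [LieRing G] [LieAlgebra K G]
    (hG : WeaklyNoetherian K G)
    (I : Submodule K (G →ₗ[K] G))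
    (hcent : ∀ θ ∈ I, ∀ x y : G, θ ⁅x, y⁆ = ⁅x, θ y⁆)
    (hsq : ∀ θ ∈ I, ∀ θ' ∈ I, θ ∘ₗ θ' = 0) :
    FiniteDimensional K I := by
  have hG : ∀ m : LieSubalgebra K G,
      FiniteDimensional K (↥m ⧸ LieAlgebra.derivedSeries K ↥m 1) := hG
  classical
  set S : Set G := {v | ∃ θ ∈ I, ∃ x : G, θ x = v} with hSdef
  set V : Submodule K G := Submodule.span K S with hVdef
  have hrange : ∀ θ ∈ I, ∀ x : G, θ x ∈ V := fun θ hθ x =>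
    Submodule.subset_span ⟨θ, hθ, x, rfl⟩
  have hcent' : ∀ θ ∈ I, ∀ x y : G, θ ⁅x, y⁆ = ⁅θ x, y⁆ := by
    intro θ hθ x y
    have h1 : θ ⁅x, y⁆ = -θ ⁅y, x⁆ := by rw [← lie_skew x y, map_neg]
    rw [h1, hcent θ hθ, lie_skew]
  have hSS : ∀ u ∈ S, ∀ w ∈ S, ⁅u, w⁆ = 0 := by
    rintro _ ⟨θ, hθ, x, rfl⟩ _ ⟨θ', hθ', y, rfl⟩
    rw [← hcent θ' hθ' (θ x) y, ← hcent' θ hθ x y, ← LinearMap.comp_apply, hsq θ' hθ' θ hθ,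
      LinearMap.zero_apply]
  have hSV : ∀ u ∈ S, ∀ w ∈ V, ⁅u, w⁆ = 0 := by
    intro u hu w hw
    have hle : V ≤ LinearMap.ker (LieAlgebra.ad K G u) :=
      Submodule.span_le.mpr fun w' hw' => by
        simp [LinearMap.mem_ker, LieAlgebra.ad_apply, hSS u hu w' hw']
    simpa [LinearMap.mem_ker, LieAlgebra.ad_apply] using hle hw
  have hVV : ∀ u ∈ V, ∀ w ∈ V, ⁅u, w⁆ = 0 := by
    intro u hu w hw
    have hle : V ≤ LinearMap.ker (LieAlgebra.ad K G w) :=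
      Submodule.span_le.mpr fun u' hu' => by
        have h0 : ⁅w, u'⁆ = 0 := by
          rw [← neg_eq_zero, lie_skew]; exact hSV u' hu' w hw
        simp [LinearMap.mem_ker, LieAlgebra.ad_apply, h0]
    have h0 : ⁅w, u⁆ = 0 := by simpa [LinearMap.mem_ker, LieAlgebra.ad_apply] using hle hu
    rw [← neg_eq_zero, lie_skew] at h0
    exact h0
  have hVideal : ∀ x : G, ∀ v ∈ V, ⁅x, v⁆ ∈ V := by
    intro x v hv
    have hle : V ≤ Submodule.comap (LieAlgebra.ad K G x) V :=
      Submodule.span_le.mpr (by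
        rintro _ ⟨θ, hθ, y, rfl⟩
        simp only [SetLike.mem_coe, Submodule.mem_comap, LieAlgebra.ad_apply]
        rw [← hcent θ hθ]
        exact hrange θ hθ _)
    simpa [LieAlgebra.ad_apply] using hle hv
  -- V as an (abelian) Lie subalgebra
  let VLie : LieSubalgebra K G :=
    { V with lie_mem' := fun {x y} hx hy => by rw [hVV x hx y hy]; exact V.zero_mem }
  have hVmem : ∀ x : G, x ∈ VLie ↔ x ∈ V := fun x => Iff.rfl
  have hderV : LieAlgebra.derivedSeries K ↥VLie 1 = ⊥ := by
    rw [LieAlgebra.derivedSeries_def, LieAlgebra.derivedSeriesOfIdeal_succ,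
      LieAlgebra.derivedSeriesOfIdeal_zero, eq_bot_iff]
    rw [LieSubmodule.lie_le_iff]
    intro a _ b _
    have hab : (⁅a, b⁆ : ↥VLie) = 0 := Subtype.ext (by
      rw [LieSubalgebra.coe_bracket]
      exact hVV a.1 a.2 b.1 b.2)
    rw [hab]; exact LieSubmodule.zero_mem _
  have hVfd : FiniteDimensional K ↥V := by
    have hQ : FiniteDimensional K
        (↥VLie ⧸ (LieAlgebra.derivedSeries K ↥VLie 1).toSubmodule) := hG VLie
    have h0 : (LieAlgebra.derivedSeries K ↥VLie 1).toSubmodule = ⊥ := by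
      rw [hderV]; rfl
    have e := Submodule.quotEquivOfEqBot _ h0
    exact Module.Finite.equiv e
  -- the adjoint map into End(V), whose kernel is the centralizer of V
  let Ψ : G →ₗ[K] (↥V →ₗ[K] ↥V) :=
    { toFun := fun x =>
        { toFun := fun v => ⟨⁅x, (v : G)⁆, hVideal x v v.2⟩
          map_add' := fun v w => Subtype.ext (by simp)
          map_smul' := fun c v => Subtype.ext (by simp) }
      map_add' := fun x y => LinearMap.ext fun v => Subtype.ext (by simp [add_lie])
      map_smul' := fun c x => LinearMap.ext fun v => Subtype.ext (by simp [smul_lie]) }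
  have hΨ : ∀ x : G, x ∈ LinearMap.ker Ψ ↔ ∀ v ∈ V, ⁅x, v⁆ = 0 := by
    intro x
    rw [LinearMap.mem_ker]
    constructor
    · intro h v hv
      have h2 := congrArg Subtype.val (LinearMap.congr_fun h ⟨v, hv⟩)
      simpa [Ψ] using h2
    · intro h
      exact LinearMap.ext fun v => Subtype.ext (by simpa [Ψ] using h v.1 v.2)
  have hGm : FiniteDimensional K (G ⧸ LinearMap.ker Ψ) := by
    have := hVfd
    exact Module.Finite.equiv Ψ.quotKerEquivRange.symm
  -- the centralizer of V as a Lie subalgebra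
  let mLie : LieSubalgebra K G :=
    { LinearMap.ker Ψ with
      lie_mem' := fun {x y} hx hy => by
        have hx' : ∀ v ∈ V, ⁅x, v⁆ = 0 := (hΨ x).mp hx
        have hy' : ∀ v ∈ V, ⁅y, v⁆ = 0 := (hΨ y).mp hy
        refine (hΨ ⁅x, y⁆).mpr fun v hv => ?_
        rw [lie_lie, hx' v hv, hy' v hv, lie_zero, lie_zero, sub_zero] }
  have hmLie : ∀ x : G, x ∈ mLie ↔ ∀ v ∈ V, ⁅x, v⁆ = 0 := fun x => hΨ x
  -- the restriction of elements of I to m, with values in V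
  let res : ↥I → (↥mLie →ₗ[K] ↥V) := fun θ =>
    { toFun := fun x => ⟨(θ : G →ₗ[K] G) x.1, hrange θ.1 θ.2 x.1⟩
      map_add' := fun x y => Subtype.ext (by simp)
      map_smul' := fun c x => Subtype.ext (map_smul (θ : G →ₗ[K] G) c x.1) }
  have hresapp : ∀ (θ : ↥I) (x : ↥mLie), ((res θ x : ↥V) : G) = (θ : G →ₗ[K] G) x.1 :=
    fun θ x => rfl
  set Dsub : Submodule K ↥mLie := (LieAlgebra.derivedSeries K ↥mLie 1).toSubmodule with hDsub
  have hres_ker : ∀ θ : ↥I, Dsub ≤ LinearMap.ker (res θ) := by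
    intro θ
    have hd : LieAlgebra.derivedSeries K ↥mLie 1 = ⁅(⊤ : LieIdeal K ↥mLie), (⊤ : LieIdeal K ↥mLie)⁆ := by
      rw [LieAlgebra.derivedSeries_def, LieAlgebra.derivedSeriesOfIdeal_succ,
        LieAlgebra.derivedSeriesOfIdeal_zero]
    rw [hDsub, hd, LieSubmodule.lieIdeal_oper_eq_linear_span']
    refine Submodule.span_le.mpr ?_
    rintro _ ⟨a, -, b, -, rfl⟩
    simp only [SetLike.mem_coe, LinearMap.mem_ker]
    refine Subtype.ext ?_
    have h1 : (θ : G →ₗ[K] G) ⁅(a : G), (b : G)⁆ = 0 := by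
      rw [hcent θ.1 θ.2]
      exact (hmLie a.1).mp a.2 _ (hrange θ.1 θ.2 b.1)
    simpa [res, LieSubalgebra.coe_bracket] using h1
  have hQm : FiniteDimensional K (↥mLie ⧸ Dsub) := hG mLie
  let F : ↥I →ₗ[K] ((↥mLie ⧸ Dsub) →ₗ[K] ↥V) :=
    { toFun := fun θ => Submodule.liftQ Dsub (res θ) (hres_ker θ)
      map_add' := by
        intro θ₁ θ₂
        refine LinearMap.ext fun z => ?_
        obtain ⟨x, rfl⟩ := Submodule.Quotient.mk_surjective _ z
        simp [Submodule.liftQ_apply, res, Subtype.ext_iff]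
      map_smul' := by
        intro c θ
        refine LinearMap.ext fun z => ?_
        obtain ⟨x, rfl⟩ := Submodule.Quotient.mk_surjective _ z
        simp [Submodule.liftQ_apply, res, Subtype.ext_iff] }
  have hFapp : ∀ (θ : ↥I) (x : ↥mLie), F θ (Submodule.Quotient.mk x) = res θ x :=
    fun θ x => rfl
  have hFker : ∀ θ : ↥I, θ ∈ LinearMap.ker F ↔ ∀ x ∈ mLie, (θ : G →ₗ[K] G) x = 0 := by
    intro θ
    rw [LinearMap.mem_ker]
    constructor
    · intro h x hx
      have h2 := LinearMap.congr_fun h (Submodule.Quotient.mk (⟨x, hx⟩ : ↥mLie))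
      rw [hFapp, LinearMap.zero_apply] at h2
      have h3 := congrArg Subtype.val h2
      rw [hresapp] at h3
      exact h3
    · intro h
      refine LinearMap.ext fun z => ?_
      obtain ⟨x, rfl⟩ := Submodule.Quotient.mk_surjective _ z
      rw [hFapp, LinearMap.zero_apply]
      exact Subtype.ext (by rw [hresapp]; exact h x.1 x.2)
  have hQI : FiniteDimensional K (↥I ⧸ LinearMap.ker F) := by
    have := hVfd
    have := hQm
    exact Module.Finite.equiv F.quotKerEquivRange.symm
  have hK0 : FiniteDimensional K ↥(LinearMap.ker F) := by
    have := hVfd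
    have := hGm
    let g : ↥(LinearMap.ker F) → (G →ₗ[K] ↥V) := fun η =>
      LinearMap.codRestrict V (η.1 : G →ₗ[K] G) fun x => hrange η.1.1 η.1.2 x
    have hg : ∀ η, LinearMap.ker Ψ ≤ LinearMap.ker (g η) := by
      intro η x hx
      have h1 := (hFker η.1).mp η.2 x hx
      exact LinearMap.mem_ker.mpr (Subtype.ext h1)
    let F₀ : ↥(LinearMap.ker F) →ₗ[K] ((G ⧸ LinearMap.ker Ψ) →ₗ[K] ↥V) :=
      { toFun := fun η => Submodule.liftQ _ (g η) (hg η)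
        map_add' := by
          intro η₁ η₂
          refine LinearMap.ext fun z => ?_
          obtain ⟨x, rfl⟩ := Submodule.Quotient.mk_surjective _ z
          simp [Submodule.liftQ_apply, g, Subtype.ext_iff]
        map_smul' := by
          intro c η
          refine LinearMap.ext fun z => ?_
          obtain ⟨x, rfl⟩ := Submodule.Quotient.mk_surjective _ z
          simp [Submodule.liftQ_apply, g, Subtype.ext_iff] }
    have hinj : Function.Injective F₀ := by
      intro η₁ η₂ h
      have hx : ∀ x : G, (η₁.1.1 : G →ₗ[K] G) x = η₂.1.1 x := by
        intro x
        have h2 := congrArg Subtype.val (LinearMap.congr_fun h (Submodule.Quotient.mk x))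
        exact h2
      exact Subtype.ext (Subtype.ext (LinearMap.ext hx))
    exact FiniteDimensional.of_injective F₀ hinj
  exact IsNoetherian.iff_fg.mp ((isNoetherian_iff_submodule_quotient (LinearMap.ker F)).mpr
    ⟨(IsNoetherian.iff_fg (K := K) (V := ↥(LinearMap.ker F))).mpr hK0, (IsNoetherian.iff_fg (K := K) (V := ↥I ⧸ LinearMap.ker F)).mpr hQI⟩)
end

section
/- Let K be a field of characteristic zero and let S be a weakly Noetherian Lie algebra over K which is simple (S is nonabelian and has no Lie ideals other than 0 and S). Then the centroid Cent(S) is finite-dimensional over K, is commutative under composition (θ ∘ θ' = θ' ∘ θ for all θ, θ' ∈ Cent(S)), and every nonzero element of Cent(S) is a bijective endomorphism of S; hence Cent(S) is a finite field extension of K. -/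
/-- The centroid of a Lie algebra: the space of `K`-linear endomorphisms `θ` with
`θ ⁅x, y⁆ = ⁅x, θ y⁆` for all `x, y`. -/
def centroid (K G : Type*) [Field K] [LieRing G] [LieAlgebra K G] :
    Submodule K (G →ₗ[K] G) where
  carrier := {θ | ∀ x y : G, θ ⁅x, y⁆ = ⁅x, θ y⁆}
  add_mem' := fun {θ θ'} hθ hθ' x y => by
    simp only [LinearMap.add_apply, hθ x y, hθ' x y, lie_add]
  zero_mem' := fun x y => by simp
  smul_mem' := fun c θ hθ x y => by
    simp only [LinearMap.smul_apply, hθ x y, lie_smul]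

/-- The centroid of a weakly Noetherian simple Lie algebra is finite
dimensional, commutative under composition, and every nonzero element of it is bijective;
hence it is a finite field extension of `K`. -/
theorem weaklyNoetherian_simple_centroid_is_finite_field_extension
    (K S : Type*) [Field K] [CharZero K] [LieRing S] [LieAlgebra K S]
    [LieAlgebra.IsSimple K S]
    (hS : WeaklyNoetherian K S) :
    FiniteDimensional K (centroid K S) ∧
    (∀ θ ∈ centroid K S, ∀ θ' ∈ centroid K S, θ ∘ₗ θ' = θ' ∘ₗ θ) ∧
    (∀ θ ∈ centroid K S, θ ≠ 0 → Function.Bijective θ) := by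
  classical
  -- θ also acts on the left slot
  have hleft : ∀ θ ∈ centroid K S, ∀ x y : S, θ ⁅x, y⁆ = ⁅θ x, y⁆ := by
    intro θ hθ x y
    have h1 : θ ⁅x, y⁆ = - θ ⁅y, x⁆ := by rw [← lie_skew x y, map_neg]
    rw [h1, hθ y x, ← lie_skew, neg_neg]
  -- a nonzero bracket
  obtain ⟨a, b, hab⟩ : ∃ a b : S, ⁅a, b⁆ ≠ 0 := by
    have hna := LieAlgebra.IsSimple.non_abelian (R := K) (L := S)
    by_contra hc; push_neg at hc; exact hna ⟨fun x m => hc x m⟩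
  -- injectivity of nonzero centroid elements
  have hinj : ∀ θ ∈ centroid K S, θ ≠ 0 → Function.Injective θ := by
    intro θ hθ hne
    set I : LieIdeal K S :=
      { toSubmodule := LinearMap.ker θ
        lie_mem := fun {x m} hm => by
          have hm' : θ m = 0 := hm
          show θ ⁅x, m⁆ = 0
          rw [hθ, hm', lie_zero] } with hI
    rcases LieAlgebra.IsSimple.eq_bot_or_eq_top I with h | h
    · rw [← LinearMap.ker_eq_bot]
      have := congrArg (fun J : LieIdeal K S => (J : Submodule K S)) h
      simpa [hI] using this
    · exfalso
      apply hne
      ext x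
      have hx : x ∈ I := h ▸ LieSubmodule.mem_top x
      exact hx
  -- surjectivity of nonzero centroid elements
  have hsurj : ∀ θ ∈ centroid K S, θ ≠ 0 → Function.Surjective θ := by
    intro θ hθ hne
    set R : LieIdeal K S :=
      { toSubmodule := LinearMap.range θ
        lie_mem := fun {x m} hm => by
          obtain ⟨n, rfl⟩ := hm
          exact ⟨⁅x, n⁆, (hθ x n)⟩ } with hR
    rcases LieAlgebra.IsSimple.eq_bot_or_eq_top R with h | h
    · exfalso
      apply hne
      ext x
      have hx : θ x ∈ R := ⟨x, rfl⟩
      rw [h] at hx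
      simpa using hx
    · rw [← LinearMap.range_eq_top]
      have := congrArg (fun J : LieIdeal K S => (J : Submodule K S)) h
      simpa [hR] using this
  -- commutativity
  have hcomm : ∀ θ ∈ centroid K S, ∀ θ' ∈ centroid K S, θ ∘ₗ θ' = θ' ∘ₗ θ := by
    intro θ hθ θ' hθ'
    set D : S →ₗ[K] S := θ ∘ₗ θ' - θ' ∘ₗ θ with hD
    have hbr2 : ∀ x y : S, θ (θ' ⁅x, y⁆) = θ' (θ ⁅x, y⁆) := by
      intro x y
      calc θ (θ' ⁅x, y⁆) = θ ⁅θ' x, y⁆ := by rw [hleft θ' hθ' x y]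
        _ = ⁅θ' x, θ y⁆ := hθ (θ' x) y
        _ = θ' ⁅x, θ y⁆ := (hleft θ' hθ' x (θ y)).symm
        _ = θ' (θ ⁅x, y⁆) := by rw [hθ x y]
    have hbr' : ∀ x y : S, D ⁅x, y⁆ = 0 := by
      intro x y; simp [hD, hbr2 x y]
    set J : LieIdeal K S :=
      { toSubmodule := LinearMap.ker D
        lie_mem := fun {x m} _ => by
          show D ⁅x, m⁆ = 0
          exact hbr' x m } with hJ
    rcases LieAlgebra.IsSimple.eq_bot_or_eq_top J with h | h
    · exfalso
      have : (⁅a, b⁆ : S) ∈ J := hbr' a b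
      rw [h] at this
      exact hab (by simpa using this)
    · have hDz : D = 0 := by
        ext x
        have hx : x ∈ J := h ▸ LieSubmodule.mem_top x
        exact hx
      have := sub_eq_zero.mp hDz
      exact this
  refine ⟨?_, hcomm, fun θ hθ hne => ⟨hinj θ hθ hne, hsurj θ hθ hne⟩⟩
  -- finite dimensionality
  set x₀ : S := ⁅a, b⁆ with hx₀def
  set e : centroid K S →ₗ[K] S :=
    { toFun := fun θ => θ.1 x₀
      map_add' := fun θ θ' => rfl
      map_smul' := fun c θ => rfl } with he
  have hm0 : ∀ u ∈ LinearMap.range e, ∀ v ∈ LinearMap.range e, ⁅u, v⁆ = (0 : S) := by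
    rintro _ ⟨θ, rfl⟩ _ ⟨θ', rfl⟩
    have h1 : ⁅(θ.1 x₀ : S), x₀⁆ = 0 := by
      rw [← hleft θ.1 θ.2 x₀ x₀, lie_self, map_zero]
    calc (⁅e θ, e θ'⁆ : S) = θ'.1 ⁅θ.1 x₀, x₀⁆ := (θ'.2 (θ.1 x₀) x₀).symm
      _ = 0 := by rw [h1, map_zero]
  set m : LieSubalgebra K S :=
    { toSubmodule := LinearMap.range e
      lie_mem' := fun {u v} hu hv => by
        have : (⁅u, v⁆ : S) ∈ LinearMap.range e := by
          rw [hm0 u hu v hv]; exact zero_mem _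
        exact this } with hm
  have habm : IsLieAbelian ↥m := by
    constructor
    intro u v
    apply Subtype.ext
    exact hm0 u.1 u.2 v.1 v.2
  have hder : LieAlgebra.derivedSeries K ↥m 1 = ⊥ := by
    rw [LieAlgebra.derivedSeries_def, ← LieAlgebra.abelian_iff_derived_one_eq_bot]
    rw [lie_abelian_iff_equiv_lie_abelian LieIdeal.topEquiv]
    infer_instance
  have hfd1 : FiniteDimensional K (↥m ⧸ LieAlgebra.derivedSeries K ↥m 1) := hS m
  rw [hder] at hfd1
  have hequiv : (↥m ⧸ (⊥ : LieIdeal K ↥m)) ≃ₗ[K] ↥m :=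
    Submodule.quotEquivOfEqBot _ rfl
  have hfd2 : FiniteDimensional K ↥m := Module.Finite.equiv hequiv
  have hker : LinearMap.ker e = ⊥ := by
    rw [LinearMap.ker_eq_bot]
    intro θ θ' hθθ'
    by_contra hneq
    have hsub : θ.1 - θ'.1 ∈ centroid K S := sub_mem θ.2 θ'.2
    have hne0 : θ.1 - θ'.1 ≠ 0 := fun h => hneq (Subtype.ext (sub_eq_zero.mp h))
    have := hinj _ hsub hne0
    have h0 : (θ.1 - θ'.1) x₀ = 0 := by
      simp only [LinearMap.sub_apply]
      rw [sub_eq_zero]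
      exact hθθ'
    have := this (a₁ := x₀) (a₂ := 0) (by simpa using h0)
    exact hab this
  exact FiniteDimensional.of_injective e.rangeRestrict
    (fun p q hpq => by
      have := congrArg Subtype.val hpq
      exact (LinearMap.ker_eq_bot.mp hker) this)
end

section
/- Let K be a field of characteristic zero, let n ≥ 1, and let 𝓛 be a Lie algebra over K equipped with a ℤⁿ-grading: a family (𝓛_m)_{m∈ℤⁿ} of K-subspaces whose internal direct sum is 𝓛, satisfying [𝓛_a, 𝓛_b] ⊆ 𝓛_{a+b} for all a, b ∈ ℤⁿ, and with each homogeneous component 𝓛_m finite-dimensional over K. If 𝓛 is weakly Noetherian, then 𝓛 is strongly Noetherian: every Lie subalgebra b of 𝓛 is finitely generated, i.e. there is a finite subset of b generating b as a Lie algebra. -/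
open DirectSum

namespace StrNoeth

variable {K L : Type*} [Field K] [LieRing L] [LieAlgebra K L]
variable {ι : Type*} [DecidableEq ι] [AddCommGroup ι]

set_option linter.unusedSectionVars false
set_option maxHeartbeats 1000000

lemma finsum_lie {α : Type*} (s : Finset α) (f : α → L) (y : L) :
    ⁅∑ a ∈ s, f a, y⁆ = ∑ a ∈ s, ⁅f a, y⁆ := by
  classical
  induction s using Finset.induction with
  | empty => simp
  | insert _ _ h ih => rw [Finset.sum_insert h, Finset.sum_insert h, add_lie, ih]

lemma lie_finsum {α : Type*} (s : Finset α) (f : α → L) (y : L) :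
    ⁅y, ∑ a ∈ s, f a⁆ = ∑ a ∈ s, ⁅y, f a⁆ := by
  classical
  induction s using Finset.induction with
  | empty => simp
  | insert _ _ h ih => rw [Finset.sum_insert h, Finset.sum_insert h, lie_add, ih]

section Core
variable {gr : ι → Submodule K L} (hin : DirectSum.IsInternal gr)
include hin

noncomputable def grE : (⨁ i, gr i) ≃ₗ[K] L :=
  LinearEquiv.ofBijective (DirectSum.coeLinearMap gr) hin

noncomputable def cpt (m : ι) : L →ₗ[K] L :=
  (gr m).subtype ∘ₗ (DirectSum.component K ι (fun i => gr i) m) ∘ₗ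
    ((grE hin).symm : L →ₗ[K] (⨁ i, gr i))

lemma cpt_apply (m : ι) (x : L) : cpt hin m x = ((grE hin).symm x) m := rfl

lemma cpt_mem (m : ι) (x : L) : cpt hin m x ∈ gr m := (((grE hin).symm x) m).2

lemma cpt_of_mem_self {m : ι} {x : L} (hx : x ∈ gr m) : cpt hin m x = x := by
  have h : (grE hin).symm x m = ⟨x, hx⟩ := hin.ofBijective_coeLinearMap_of_mem hx
  rw [cpt_apply, h]

lemma cpt_of_mem_ne {m m' : ι} {x : L} (hx : x ∈ gr m') (hne : m' ≠ m) :
    cpt hin m x = 0 := by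
  have h : (grE hin).symm x m = 0 := hin.ofBijective_coeLinearMap_of_mem_ne hne hx
  rw [cpt_apply, h]; rfl

lemma exists_support (x : L) :
    ∃ s : Finset ι, (∀ m, m ∉ s → cpt hin m x = 0) ∧ x = ∑ m ∈ s, cpt hin m x := by
  classical
  refine ⟨((grE hin).symm x).support, fun m hm => ?_, ?_⟩
  · rw [cpt_apply]
    rw [DFinsupp.notMem_support_iff] at hm
    rw [hm]; rfl
  · conv_lhs => rw [show x = (grE hin) ((grE hin).symm x) by simp]
    rw [show ((grE hin) ((grE hin).symm x) : L)
        = DirectSum.coeLinearMap gr ((grE hin).symm x) from rfl]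
    rw [DirectSum.coeLinearMap_eq_dfinsuppSum]
    rfl

variable (gr) in
def MM (s : Set ι) : Submodule K L := ⨆ m ∈ s, gr m

lemma cpt_ext {x : L} (h : ∀ m, cpt hin m x = 0) : x = 0 := by
  obtain ⟨s, _, hxs⟩ := exists_support hin x
  rw [hxs]
  exact Finset.sum_eq_zero fun m _ => h m

omit hin in
lemma gr_le_MM {s : Set ι} {m : ι} (hm : m ∈ s) : gr m ≤ MM gr s := le_biSup gr hm

omit hin in
lemma MM_mono {s t : Set ι} (h : s ⊆ t) : MM gr s ≤ MM gr t :=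
  biSup_mono h

lemma mem_MM_of {s : Set ι} {x : L} (h : ∀ m, m ∉ s → cpt hin m x = 0) :
    x ∈ MM gr s := by
  obtain ⟨sx, hx0, hxs⟩ := exists_support hin x
  rw [hxs]
  refine Submodule.sum_mem _ fun m _ => ?_
  by_cases hm : m ∈ s
  · exact gr_le_MM hm (cpt_mem hin m x)
  · rw [h m hm]; exact Submodule.zero_mem _

lemma cpt_eq_zero_of_mem_MM {s : Set ι} {x : L} (hx : x ∈ MM gr s) {m : ι} (hm : m ∉ s) :
    cpt hin m x = 0 := by
  rw [MM, iSup_subtype'] at hx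
  refine Submodule.iSup_induction (motive := fun y => cpt hin m y = 0) _ hx
    (fun p y hy => cpt_of_mem_ne hin hy (fun h => hm (h ▸ p.2))) (map_zero _)
    (fun y z hy hz => by
      change cpt hin m (y + z) = 0
      change cpt hin m y = 0 at hy
      change cpt hin m z = 0 at hz
      rw [map_add, hy, hz, add_zero])

lemma mem_MM_iff {s : Set ι} {x : L} :
    x ∈ MM gr s ↔ ∀ m, m ∉ s → cpt hin m x = 0 :=
  ⟨fun hx _ hm => cpt_eq_zero_of_mem_MM hin hx hm, mem_MM_of hin⟩

lemma mem_MM_univ (x : L) : x ∈ MM gr (Set.univ) :=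
  mem_MM_of hin (fun m hm => absurd (Set.mem_univ m) hm)

lemma mem_MM_inter {s t : Set ι} {x : L} (hs : x ∈ MM gr s) (ht : x ∈ MM gr t) :
    x ∈ MM gr (s ∩ t) := by
  refine mem_MM_of hin fun m hm => ?_
  rcases (by simpa [Set.mem_inter_iff, or_iff_not_imp_left] using hm :
    m ∉ s ∨ m ∉ t) with h | h
  · exact cpt_eq_zero_of_mem_MM hin hs h
  · exact cpt_eq_zero_of_mem_MM hin ht h

noncomputable def proj (t : Set ι) : L →ₗ[K] L := by
  classical
  exact (DirectSum.coeLinearMap gr) ∘ₗ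
    (DFinsupp.filterLinearMap K (fun i => gr i) (· ∈ t)) ∘ₗ
    ((grE hin).symm : L →ₗ[K] (⨁ i, gr i))

lemma cpt_proj_of_mem {t : Set ι} {m : ι} (hm : m ∈ t) (x : L) :
    cpt hin m (proj hin t x) = cpt hin m x := by
  classical
  have h1 : proj hin t x
      = (grE hin) (DFinsupp.filter (· ∈ t) ((grE hin).symm x)) := by
    simp only [proj]
    rfl
  rw [cpt_apply, h1, LinearEquiv.symm_apply_apply]
  rw [show (DFinsupp.filter (· ∈ t) ((grE hin).symm x)) m
      = if m ∈ t then ((grE hin).symm x) m else 0 from DFinsupp.filter_apply _ _ _]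
  rw [if_pos hm]
  rfl

lemma cpt_proj_of_not_mem {t : Set ι} {m : ι} (hm : m ∉ t) (x : L) :
    cpt hin m (proj hin t x) = 0 := by
  classical
  have h1 : proj hin t x
      = (grE hin) (DFinsupp.filter (· ∈ t) ((grE hin).symm x)) := by
    simp only [proj]
    rfl
  rw [cpt_apply, h1, LinearEquiv.symm_apply_apply]
  rw [show (DFinsupp.filter (· ∈ t) ((grE hin).symm x)) m
      = if m ∈ t then ((grE hin).symm x) m else 0 from DFinsupp.filter_apply _ _ _]
  rw [if_neg hm]
  rfl

lemma proj_mem_MM (t : Set ι) (x : L) : proj hin t x ∈ MM gr t :=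
  mem_MM_of hin fun m hm => cpt_proj_of_not_mem hin hm x

lemma proj_mem_MM_inter {s : Set ι} (t : Set ι) {x : L} (hx : x ∈ MM gr s) :
    proj hin t x ∈ MM gr (s ∩ t) := by
  refine mem_MM_of hin fun m hm => ?_
  by_cases hmt : m ∈ t
  · rw [cpt_proj_of_mem hin hmt]
    exact cpt_eq_zero_of_mem_MM hin hx (fun hms => hm ⟨hms, hmt⟩)
  · exact cpt_proj_of_not_mem hin hmt x

lemma proj_eq_self {t : Set ι} {x : L} (hx : x ∈ MM gr t) : proj hin t x = x := by
  have h : ∀ m, cpt hin m (proj hin t x - x) = 0 := by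
    intro m
    rw [map_sub]
    by_cases hm : m ∈ t
    · rw [cpt_proj_of_mem hin hm, sub_self]
    · rw [cpt_proj_of_not_mem hin hm, cpt_eq_zero_of_mem_MM hin hx hm, sub_zero]
  exact sub_eq_zero.mp (cpt_ext hin h)

lemma proj_eq_zero {s t : Set ι} {x : L} (hx : x ∈ MM gr s) (hd : ∀ m ∈ s, m ∉ t) :
    proj hin t x = 0 := by
  refine cpt_ext hin fun m => ?_
  by_cases hm : m ∈ t
  · rw [cpt_proj_of_mem hin hm]
    exact cpt_eq_zero_of_mem_MM hin hx (fun hms => hd m hms hm)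
  · exact cpt_proj_of_not_mem hin hm x

lemma sub_proj_mem {s t : Set ι} {x : L} (hx : x ∈ MM gr s) :
    x - proj hin t x ∈ MM gr (s \ t) := by
  refine mem_MM_of hin fun m hm => ?_
  rw [map_sub]
  by_cases hmt : m ∈ t
  · rw [cpt_proj_of_mem hin hmt, sub_self]
  · rw [cpt_proj_of_not_mem hin hmt, sub_zero]
    exact cpt_eq_zero_of_mem_MM hin hx (fun hms => hm ⟨hms, hmt⟩)

lemma lie_mem_MM (hbr : ∀ a b : ι, ∀ x ∈ gr a, ∀ y ∈ gr b, ⁅x, y⁆ ∈ gr (a + b))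
    {s t u : Set ι} {x y : L} (hx : x ∈ MM gr s) (hy : y ∈ MM gr t)
    (h : ∀ a ∈ s, ∀ b ∈ t, a + b ∈ u) : ⁅x, y⁆ ∈ MM gr u := by
  obtain ⟨sx, hx0, hxs⟩ := exists_support hin x
  obtain ⟨sy, hy0, hys⟩ := exists_support hin y
  rw [hxs, hys, finsum_lie]
  refine Submodule.sum_mem _ fun a _ => ?_
  rw [lie_finsum]
  refine Submodule.sum_mem _ fun b _ => ?_
  by_cases ha : a ∈ s
  · by_cases hb : b ∈ t
    · exact gr_le_MM (h a ha b hb) (hbr a b _ (cpt_mem hin a x) _ (cpt_mem hin b y))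
    · rw [cpt_eq_zero_of_mem_MM hin hy hb, lie_zero]
      exact Submodule.zero_mem _
  · rw [cpt_eq_zero_of_mem_MM hin hx ha, zero_lie]
    exact Submodule.zero_mem _

lemma exists_mem_MM_le (lam : ι →+ ℤ) (x : L) :
    ∃ N : ℕ, x ∈ MM gr {m | lam m ≤ (N : ℤ)} := by
  classical
  obtain ⟨s, hs0, hxs⟩ := exists_support hin x
  refine ⟨s.sup fun m => (lam m).toNat, mem_MM_of hin fun m hm => ?_⟩
  by_cases hms : m ∈ s
  · exfalso
    refine hm ?_
    calc lam m ≤ ((lam m).toNat : ℤ) := Int.self_le_toNat _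
      _ ≤ _ := Int.ofNat_le.mpr (Finset.le_sup (f := fun m => (lam m).toNat) hms)
  · exact hs0 m hms



variable (hbr : ∀ a b : ι, ∀ x ∈ gr a, ∀ y ∈ gr b, ⁅x, y⁆ ∈ gr (a + b))
variable (lam : ι →+ ℤ)

omit hin in
def lev (d : ℤ) : Set ι := {m | lam m = d}

omit hin in
def Fle (d : ℤ) : Set ι := {m | lam m ≤ d}

omit hin in
lemma lev_subset_Fle {d : ℤ} : lev lam d ⊆ Fle lam d := fun _ hm => le_of_eq hm

omit hin in
lemma Fle_subset_Fle {d e : ℤ} (h : d ≤ e) : Fle lam d ⊆ Fle lam e :=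
  fun _ hm => le_trans hm h

noncomputable def G (b : LieSubalgebra K L) (d : ℤ) : Submodule K L :=
  Submodule.map (proj hin (lev lam d)) ((b : Submodule K L) ⊓ MM gr (Fle lam d))

lemma G_le_MM {b : LieSubalgebra K L} {d : ℤ} : G hin lam b d ≤ MM gr (lev lam d) := by
  rintro u ⟨x, hx, rfl⟩
  exact proj_mem_MM hin _ x

lemma G_le_MM_one {b : LieSubalgebra K L} {d : ℤ} (hd : 1 ≤ d) :
    G hin lam b d ≤ MM gr {m | 1 ≤ lam m} :=
  le_trans (G_le_MM hin lam) (MM_mono (fun m hm => by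
    simp only [lev, Set.mem_setOf_eq] at hm ⊢; omega))

include hbr in
lemma lie_G {b : LieSubalgebra K L} {d e : ℤ} {u v : L}
    (hu : u ∈ G hin lam b d) (hv : v ∈ G hin lam b e) :
    ⁅u, v⁆ ∈ G hin lam b (d + e) := by
  obtain ⟨x, ⟨hxb, hxM⟩, rfl⟩ := hu
  obtain ⟨y, ⟨hyb, hyM⟩, rfl⟩ := hv
  set u := proj hin (lev lam d) x with hu_def
  set v := proj hin (lev lam e) y with hv_def
  have hule : lev lam d ⊆ Fle lam d := fun m hm => le_of_eq hm
  have hu_mem : u ∈ MM gr (lev lam d) := proj_mem_MM hin _ x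
  have hv_mem : v ∈ MM gr (lev lam e) := proj_mem_MM hin _ y
  have hxu : x - u ∈ MM gr (Fle lam (d - 1)) := by
    refine MM_mono ?_ (sub_proj_mem hin hxM)
    intro m hm
    have h1 : lam m ≤ d := hm.1
    have h2 : ¬ lam m = d := hm.2
    simp only [Fle, Set.mem_setOf_eq]; omega
  have hyv : y - v ∈ MM gr (Fle lam (e - 1)) := by
    refine MM_mono ?_ (sub_proj_mem hin hyM)
    intro m hm
    have h1 : lam m ≤ e := hm.1
    have h2 : ¬ lam m = e := hm.2
    simp only [Fle, Set.mem_setOf_eq]; omega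
  have hw : ⁅x, y⁆ - ⁅u, v⁆ ∈ MM gr (Fle lam (d + e - 1)) := by
    have hd1 : ⁅x, y⁆ - ⁅u, v⁆ = ⁅u, y - v⁆ + ⁅x - u, v⁆ + ⁅x - u, y - v⁆ := by
      simp only [lie_sub, sub_lie]
      abel
    rw [hd1]
    refine Submodule.add_mem _ (Submodule.add_mem _ ?_ ?_) ?_
    · refine lie_mem_MM hin hbr hu_mem hyv fun a ha b hb => ?_
      simp only [lev, Set.mem_setOf_eq] at ha
      simp only [Fle, Set.mem_setOf_eq] at hb ⊢
      rw [map_add]; omega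
    · refine lie_mem_MM hin hbr hxu hv_mem fun a ha b hb => ?_
      simp only [Fle, Set.mem_setOf_eq] at ha
      simp only [lev, Set.mem_setOf_eq] at hb
      simp only [Fle, Set.mem_setOf_eq]
      rw [map_add]; omega
    · refine lie_mem_MM hin hbr hxu hyv fun a ha b hb => ?_
      simp only [Fle, Set.mem_setOf_eq] at ha hb ⊢
      rw [map_add]; omega
  have huv : ⁅u, v⁆ ∈ MM gr (lev lam (d + e)) := by
    refine lie_mem_MM hin hbr hu_mem hv_mem fun a ha b hb => ?_
    simp only [lev, Set.mem_setOf_eq] at ha hb ⊢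
    rw [map_add, ha, hb]
  have hxyb : ⁅x, y⁆ ∈ (b : Submodule K L) := b.lie_mem hxb hyb
  have hxyM : ⁅x, y⁆ ∈ MM gr (Fle lam (d + e)) := by
    have h1 : (⁅x, y⁆ : L) = ⁅u, v⁆ + (⁅x, y⁆ - ⁅u, v⁆) := by abel
    rw [h1]
    refine Submodule.add_mem _ ?_ ?_
    · exact MM_mono (lev_subset_Fle lam) huv
    · exact MM_mono (Fle_subset_Fle lam (by omega)) hw
  have hproj : proj hin (lev lam (d + e)) ⁅x, y⁆ = ⁅u, v⁆ := by
    have h1 : (⁅x, y⁆ : L) = ⁅u, v⁆ + (⁅x, y⁆ - ⁅u, v⁆) := by abel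
    rw [h1, map_add, proj_eq_self hin huv,
      proj_eq_zero hin hw (fun m hm hm' => by
        simp only [Fle, Set.mem_setOf_eq] at hm
        simp only [lev, Set.mem_setOf_eq] at hm'
        omega), add_zero]
  rw [← hproj]
  exact Submodule.mem_map_of_mem ⟨hxyb, hxyM⟩

noncomputable def H (b : LieSubalgebra K L) : Submodule K L :=
  ⨆ (d : ℤ) (_ : 1 ≤ d), G hin lam b d

lemma G_le_H {b : LieSubalgebra K L} {d : ℤ} (hd : 1 ≤ d) :
    G hin lam b d ≤ H hin lam b :=
  le_iSup₂ (f := fun (d : ℤ) (_ : 1 ≤ d) => G hin lam b d) d hd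

lemma H_le_MM {b : LieSubalgebra K L} : H hin lam b ≤ MM gr {m | 1 ≤ lam m} :=
  iSup₂_le fun _ hd => G_le_MM_one hin lam hd

include hbr in
lemma lie_mem_H {b : LieSubalgebra K L} {u v : L}
    (hu : u ∈ H hin lam b) (hv : v ∈ H hin lam b) : ⁅u, v⁆ ∈ H hin lam b := by
  rw [H, iSup_subtype'] at hu hv
  refine Submodule.iSup_induction (motive := fun w => ∀ v ∈ H hin lam b, ⁅w, v⁆ ∈ H hin lam b)
    _ hu ?_ ?_ ?_ v ?_
  · intro p w hw v' hv'
    rw [H, iSup_subtype'] at hv'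
    refine Submodule.iSup_induction (motive := fun z => ⁅w, z⁆ ∈ H hin lam b) _ hv' ?_ ?_ ?_
    · intro q z hz
      exact G_le_H hin lam (by have := p.2; have := q.2; omega : (1:ℤ) ≤ ↑p + ↑q)
        (lie_G hin hbr lam hw hz)
    · show ⁅w, (0:L)⁆ ∈ _
      rw [lie_zero]; exact Submodule.zero_mem _
    · intro y z hy hz
      show ⁅w, y + z⁆ ∈ _
      rw [lie_add]
      exact Submodule.add_mem _ hy hz
  · intro v' _
    show ⁅(0:L), v'⁆ ∈ _
    rw [zero_lie]; exact Submodule.zero_mem _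
  · intro y z hy hz v' hv'
    show ⁅y + z, v'⁆ ∈ _
    rw [add_lie]
    exact Submodule.add_mem _ (hy v' hv') (hz v' hv')
  · show v ∈ ⨆ (d : ℤ) (_ : 1 ≤ d), G hin lam b d
    rw [iSup_subtype']
    exact hv

lemma proj_lev_mem_G_of_mem_H {b : LieSubalgebra K L} {x : L} (hx : x ∈ H hin lam b)
    {d : ℤ} (hd : 1 ≤ d) : proj hin (lev lam d) x ∈ G hin lam b d := by
  rw [H, iSup_subtype'] at hx
  refine Submodule.iSup_induction
    (motive := fun w => ∀ d : ℤ, 1 ≤ d → proj hin (lev lam d) w ∈ G hin lam b d) _ hx ?_ ?_ ?_ d hd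
  · rintro ⟨e, he⟩ w hw d' hd'
    by_cases hde : d' = e
    · subst hde
      rw [proj_eq_self hin (G_le_MM hin lam hw)]
      exact hw
    · rw [proj_eq_zero hin (G_le_MM hin lam hw) (fun m hm hm' => by
        simp only [lev, Set.mem_setOf_eq] at hm hm'
        exact hde (hm'.symm.trans hm))]
      exact Submodule.zero_mem _
  · intro d' _
    show proj hin (lev lam d') 0 ∈ _
    rw [map_zero]; exact Submodule.zero_mem _
  · intro y z hy hz d' hd'
    show proj hin (lev lam d') (y + z) ∈ _
    rw [map_add]
    exact Submodule.add_mem _ (hy d' hd') (hz d' hd')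

lemma eq_sum_proj_of_mem_H {b : LieSubalgebra K L} {x : L} (hx : x ∈ H hin lam b)
    (s : Finset ℤ) (hs : ∀ m : ι, cpt hin m x ≠ 0 → lam m ∈ s) :
    x = ∑ d ∈ s, proj hin (lev lam d) x := by
  classical
  have key : ∀ m, cpt hin m (x - ∑ d ∈ s, proj hin (lev lam d) x) = 0 := by
    intro m
    rw [map_sub, map_sum]
    have hterm : ∀ d ∈ s, cpt hin m (proj hin (lev lam d) x)
        = if lam m = d then cpt hin m x else 0 := by
      intro d _
      by_cases hmd : lam m = d
      · rw [if_pos hmd, cpt_proj_of_mem hin (show m ∈ lev lam d from hmd)]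
      · rw [if_neg hmd, cpt_proj_of_not_mem hin (show m ∉ lev lam d from hmd)]
    rw [Finset.sum_congr rfl hterm]
    by_cases hzero : cpt hin m x = 0
    · rw [hzero]
      simp
    · rw [Finset.sum_ite_eq s (lam m) (fun _ => cpt hin m x), if_pos (hs m hzero), sub_self]
  exact sub_eq_zero.mp (cpt_ext hin key)


include hbr in
lemma main_pos
    (hWN' : ∀ m : LieSubalgebra K L, ∃ T : Finset L, (↑T : Set L) ⊆ (m : Set L) ∧
      (m : Submodule K L) ≤ Submodule.span K (↑T : Set L) ⊔
        Submodule.span K {z : L | ∃ u ∈ m, ∃ v ∈ m, ⁅u, v⁆ = z})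
    (b : LieSubalgebra K L) :
    ∃ X : Finset L, (↑X : Set L) ⊆ (b : Set L) ∧ ∀ x ∈ b,
      ∃ z ∈ (b : Submodule K L) ⊓ MM gr (Fle lam 0),
        x - z ∈ LieSubalgebra.lieSpan K L (↑X : Set L) := by
  classical
  set Hb : LieSubalgebra K L :=
    { toSubmodule := H hin lam b
      lie_mem' := fun hx hy => lie_mem_H hin hbr lam hx hy } with hHb
  obtain ⟨T, hTsub, hTle⟩ := hWN' Hb
  have hTmem : ∀ t ∈ T, t ∈ H hin lam b := fun t ht => hTsub (Finset.mem_coe.mpr ht)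
  set DT : Finset ℤ := T.biUnion (fun t => ((grE hin).symm t).support.image lam) with hDTdef
  have hDT : ∀ t ∈ T, ∀ m : ι, cpt hin m t ≠ 0 → lam m ∈ DT := by
    intro t ht m hm
    refine Finset.mem_biUnion.mpr ⟨t, ht, Finset.mem_image_of_mem _ ?_⟩
    refine DFinsupp.mem_support_iff.mpr fun h0 => hm ?_
    rw [cpt_apply, h0]; rfl
  have hex : ∀ td : L × ℤ, ∃ x : L,
      x ∈ b ∧ ((td.1 ∈ H hin lam b ∧ 1 ≤ td.2) →
        (x ∈ (b : Submodule K L) ⊓ MM gr (Fle lam td.2) ∧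
          proj hin (lev lam td.2) x = proj hin (lev lam td.2) td.1)) := by
    rintro ⟨t, d⟩
    by_cases hcnd : t ∈ H hin lam b ∧ 1 ≤ d
    · obtain ⟨x, hx, hproj⟩ := proj_lev_mem_G_of_mem_H hin lam hcnd.1 hcnd.2
      exact ⟨x, hx.1, fun _ => ⟨hx, hproj⟩⟩
    · exact ⟨0, b.zero_mem, fun h => absurd h hcnd⟩
  choose f hf1 hf2 using hex
  set X : Finset L := (T ×ˢ DT).image f with hX
  have hXsub : (↑X : Set L) ⊆ (b : Set L) := by
    rw [hX, Finset.coe_image]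
    rintro x ⟨td, _, rfl⟩
    exact hf1 td
  set c : LieSubalgebra K L := LieSubalgebra.lieSpan K L (↑X : Set L) with hcdef
  have hcb : c ≤ b := LieSubalgebra.lieSpan_le.mpr hXsub
  have key : ∀ N : ℕ, ∀ d : ℤ, 1 ≤ d → d ≤ (N : ℤ) →
      G hin lam b d ≤ G hin lam c d := by
    intro N
    induction N with
    | zero =>
      intro d h1 h2
      exact absurd (h1.trans h2) (by norm_num)
    | succ N ih =>
      intro d h1 h2
      rcases lt_or_eq_of_le h2 with hlt | heq
      · exact ih d h1 (by push_cast at hlt ⊢; omega)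
      · intro u hu
        have huH : u ∈ H hin lam b := G_le_H hin lam h1 hu
        have huMM : u ∈ MM gr (lev lam d) := G_le_MM hin lam hu
        have husup := hTle huH
        have huproj : proj hin (lev lam d) u = u := proj_eq_self hin huMM
        rcases Submodule.mem_sup.mp husup with ⟨p, hp, w, hw, hpw⟩
        have hu_eq : u = proj hin (lev lam d) p + proj hin (lev lam d) w := by
          rw [← map_add, hpw, huproj]
        have hTpart : ∀ y ∈ Submodule.span K (↑T : Set L),
            proj hin (lev lam d) y ∈ G hin lam c d := by
          intro y hy
          refine Submodule.span_induction ?_ ?_ ?_ ?_ hy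
          · intro t ht
            have htT : t ∈ T := Finset.mem_coe.mp ht
            by_cases h0 : proj hin (lev lam d) t = 0
            · rw [h0]; exact Submodule.zero_mem _
            · have hdDT : d ∈ DT := by
                by_contra hnd
                refine h0 (cpt_ext hin fun m => ?_)
                by_cases hm : m ∈ lev lam d
                · rw [cpt_proj_of_mem hin hm]
                  by_contra hc0
                  exact hnd (by
                    have := hDT t htT m hc0
                    have hlm : lam m = d := hm
                    rwa [hlm] at this)
                · exact cpt_proj_of_not_mem hin hm t
              have hcnd := hf2 (t, d) ⟨hTmem t htT, h1⟩
              have hfX : f (t, d) ∈ X := by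
                rw [hX]
                exact Finset.mem_image_of_mem f (Finset.mem_product.mpr ⟨htT, hdDT⟩)
              have hfc : f (t, d) ∈ (c : Submodule K L) :=
                LieSubalgebra.subset_lieSpan (Finset.mem_coe.mpr hfX)
              rw [← hcnd.2]
              exact Submodule.mem_map_of_mem ⟨hfc, hcnd.1.2⟩
          · rw [map_zero]; exact Submodule.zero_mem _
          · intro y₁ y₂ _ _ hy₁ hy₂
            rw [map_add]; exact Submodule.add_mem _ hy₁ hy₂
          · intro r y₁ _ hy₁
            rw [map_smul]; exact Submodule.smul_mem _ r hy₁
        have hBrpart : ∀ y ∈ Submodule.span K {z : L | ∃ u' ∈ Hb, ∃ v' ∈ Hb, ⁅u', v'⁆ = z},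
            proj hin (lev lam d) y ∈ G hin lam c d := by
          intro y hy
          refine Submodule.span_induction ?_ ?_ ?_ ?_ hy
          · rintro z ⟨p', hp', q', hq', rfl⟩
            have hp'H : p' ∈ H hin lam b := hp'
            have hq'H : q' ∈ H hin lam b := hq'
            set sp : Finset ℤ := ((grE hin).symm p').support.image lam with hspdef
            set sq : Finset ℤ := ((grE hin).symm q').support.image lam with hsqdef
            have hsp : ∀ m : ι, cpt hin m p' ≠ 0 → lam m ∈ sp := by
              intro m hm
              refine Finset.mem_image_of_mem _ (DFinsupp.mem_support_iff.mpr fun h0 => hm ?_)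
              rw [cpt_apply, h0]; rfl
            have hsq : ∀ m : ι, cpt hin m q' ≠ 0 → lam m ∈ sq := by
              intro m hm
              refine Finset.mem_image_of_mem _ (DFinsupp.mem_support_iff.mpr fun h0 => hm ?_)
              rw [cpt_apply, h0]; rfl
            have hps := eq_sum_proj_of_mem_H hin lam hp'H sp hsp
            have hqs := eq_sum_proj_of_mem_H hin lam hq'H sq hsq
            rw [show (⁅p', q'⁆ : L)
                = ⁅∑ e ∈ sp, proj hin (lev lam e) p', ∑ g ∈ sq, proj hin (lev lam g) q'⁆ by
              rw [← hps, ← hqs]]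
            rw [finsum_lie, map_sum]
            refine Submodule.sum_mem _ fun e _ => ?_
            rw [lie_finsum, map_sum]
            refine Submodule.sum_mem _ fun g _ => ?_
            by_cases he1 : 1 ≤ e
            · by_cases hg1 : 1 ≤ g
              · have hpe : proj hin (lev lam e) p' ∈ G hin lam b e :=
                  proj_lev_mem_G_of_mem_H hin lam hp'H he1
                have hqg : proj hin (lev lam g) q' ∈ G hin lam b g :=
                  proj_lev_mem_G_of_mem_H hin lam hq'H hg1
                have hlie : ⁅proj hin (lev lam e) p', proj hin (lev lam g) q'⁆
                    ∈ MM gr (lev lam (e + g)) := by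
                  refine lie_mem_MM hin hbr (proj_mem_MM hin _ p') (proj_mem_MM hin _ q')
                    fun a ha b' hb' => ?_
                  have ha' : lam a = e := ha
                  have hb'' : lam b' = g := hb'
                  show lam (a + b') = e + g
                  rw [map_add, ha', hb'']
                by_cases heg : e + g = d
                · have hlie' : ⁅proj hin (lev lam e) p', proj hin (lev lam g) q'⁆
                      ∈ MM gr (lev lam d) := heg ▸ hlie
                  rw [proj_eq_self hin hlie']
                  have hpec : proj hin (lev lam e) p' ∈ G hin lam c e :=
                    ih e he1 (by omega) hpe
                  have hqgc : proj hin (lev lam g) q' ∈ G hin lam c g :=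
                    ih g hg1 (by omega) hqg
                  exact heg ▸ lie_G hin hbr lam hpec hqgc
                · rw [proj_eq_zero hin hlie (fun m hm hm' => by
                    have h1' : lam m = e + g := hm
                    have h2' : lam m = d := hm'
                    exact heg (h1' ▸ h2'))]
                  exact Submodule.zero_mem _
              · have hqg0 : proj hin (lev lam g) q' = 0 := by
                  refine proj_eq_zero hin (H_le_MM hin lam hq'H) fun m hm hm' => ?_
                  have h1' : (1 : ℤ) ≤ lam m := hm
                  have h2' : lam m = g := hm'
                  omega
                rw [hqg0, lie_zero, map_zero]
                exact Submodule.zero_mem _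
            · have hpe0 : proj hin (lev lam e) p' = 0 := by
                refine proj_eq_zero hin (H_le_MM hin lam hp'H) fun m hm hm' => ?_
                have h1' : (1 : ℤ) ≤ lam m := hm
                have h2' : lam m = e := hm'
                omega
              rw [hpe0, zero_lie, map_zero]
              exact Submodule.zero_mem _
          · rw [map_zero]; exact Submodule.zero_mem _
          · intro y₁ y₂ _ _ hy₁ hy₂
            rw [map_add]; exact Submodule.add_mem _ hy₁ hy₂
          · intro r y₁ _ hy₁
            rw [map_smul]; exact Submodule.smul_mem _ r hy₁
        rw [hu_eq]
        exact Submodule.add_mem _ (hTpart p hp) (hBrpart w hw)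
  have red : ∀ N : ℕ, ∀ x, x ∈ b → x ∈ MM gr (Fle lam (N : ℤ)) →
      ∃ z ∈ (b : Submodule K L) ⊓ MM gr (Fle lam 0),
        x - z ∈ LieSubalgebra.lieSpan K L (↑X : Set L) := by
    intro N
    induction N with
    | zero =>
      intro x hxb hxM
      refine ⟨x, ⟨hxb, by simpa using hxM⟩, ?_⟩
      rw [sub_self]
      exact (LieSubalgebra.lieSpan K L (↑X : Set L)).zero_mem
    | succ N ih =>
      intro x hxb hxM
      have hd1 : (1 : ℤ) ≤ ((N + 1 : ℕ) : ℤ) := by push_cast; omega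
      have hu : proj hin (lev lam ((N + 1 : ℕ) : ℤ)) x ∈ G hin lam b ((N + 1 : ℕ) : ℤ) :=
        Submodule.mem_map_of_mem ⟨hxb, hxM⟩
      have huc := key (N + 1) _ hd1 (le_refl _) hu
      obtain ⟨y, ⟨hyc, hyM⟩, hproj⟩ := huc
      have hyb : y ∈ (b : Submodule K L) := hcb hyc
      have hxy_b : x - y ∈ (b : Submodule K L) := Submodule.sub_mem _ hxb hyb
      have hxyM : x - y ∈ MM gr (Fle lam (N : ℤ)) := by
        refine mem_MM_of hin fun m hm => ?_
        have hm' : ¬ lam m ≤ (N : ℤ) := hm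
        rw [map_sub]
        by_cases hNm : lam m = ((N + 1 : ℕ) : ℤ)
        · have hmlev : m ∈ lev lam ((N + 1 : ℕ) : ℤ) := hNm
          have e1 : cpt hin m x = cpt hin m (proj hin (lev lam ((N + 1 : ℕ) : ℤ)) x) :=
            (cpt_proj_of_mem hin hmlev x).symm
          have e2 : cpt hin m y = cpt hin m (proj hin (lev lam ((N + 1 : ℕ) : ℤ)) y) :=
            (cpt_proj_of_mem hin hmlev y).symm
          rw [e1, e2, hproj, sub_self]
        · have hx0 : cpt hin m x = 0 :=
            cpt_eq_zero_of_mem_MM hin hxM (fun hmem => by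
              have : lam m ≤ ((N + 1 : ℕ) : ℤ) := hmem
              push_cast at this hm' hNm
              omega)
          have hy0 : cpt hin m y = 0 :=
            cpt_eq_zero_of_mem_MM hin hyM (fun hmem => by
              have : lam m ≤ ((N + 1 : ℕ) : ℤ) := hmem
              push_cast at this hm' hNm
              omega)
          rw [hx0, hy0, sub_self]
      obtain ⟨z, hz, hxyz⟩ := ih (x - y) ((LieSubalgebra.mem_toSubmodule b).mp hxy_b) hxyM
      refine ⟨z, hz, ?_⟩
      have hrw : x - z = y + (x - y - z) := by abel
      rw [hrw]
      exact (LieSubalgebra.lieSpan K L (↑X : Set L)).add_mem hyc hxyz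
  refine ⟨X, hXsub, fun x hx => ?_⟩
  obtain ⟨N, hN⟩ := exists_mem_MM_le hin lam x
  exact red N x hx hN

end Core

end StrNoeth
section WNprime

variable {K L : Type*} [Field K] [LieRing L] [LieAlgebra K L]

lemma wn'_aux
    (hWN : ∀ m : LieSubalgebra K L,
      FiniteDimensional K (↥m ⧸ LieAlgebra.derivedSeries K ↥m 1))
    (m : LieSubalgebra K L) :
    ∃ T : Finset L, (↑T : Set L) ⊆ (m : Set L) ∧
      (m : Submodule K L) ≤ Submodule.span K (↑T : Set L) ⊔
        Submodule.span K {z : L | ∃ u ∈ m, ∃ v ∈ m, ⁅u, v⁆ = z} := by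
  classical
  haveI := hWN m
  set D : LieIdeal K ↥m := LieAlgebra.derivedSeries K ↥m 1 with hD
  have hfg : (⊤ : Submodule K (↥m ⧸ D)).FG := Module.finite_def.mp inferInstance
  obtain ⟨T0, hT0⟩ := hfg
  set q : ↥m →ₗ[K] ↥m ⧸ (D : LieSubmodule K ↥m ↥m).toSubmodule :=
    Submodule.mkQ _ with hq
  have hsurj : Function.Surjective q := Submodule.mkQ_surjective _
  set T1 : Finset ↥m := T0.image (fun w => (hsurj w).choose) with hT1
  have himg : q '' (T1 : Set ↥m) = (T0 : Set (↥m ⧸ D)) := by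
    refine Set.eq_of_subset_of_subset ?_ ?_
    · rintro w ⟨y, hy, rfl⟩
      obtain ⟨w0, hw0, rfl⟩ := Finset.mem_image.mp (Finset.mem_coe.mp hy)
      show q ((hsurj w0).choose) ∈ (T0 : Set (↥m ⧸ D))
      rw [(hsurj w0).choose_spec]
      exact hw0
    · intro w hw
      exact ⟨(hsurj w).choose, Finset.mem_coe.mpr (Finset.mem_image_of_mem _ hw),
        (hsurj w).choose_spec⟩
  have hmemsup : ∀ x : ↥m, x ∈ Submodule.span K (T1 : Set ↥m) ⊔ D.toSubmodule := by
    intro x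
    have hx : q x ∈ Submodule.map q (Submodule.span K (T1 : Set ↥m)) := by
      rw [Submodule.map_span, himg, hT0]
      exact Submodule.mem_top
    obtain ⟨y, hy, hyx⟩ := hx
    have hker : x - y ∈ D.toSubmodule := by
      rw [← Submodule.ker_mkQ (D : LieSubmodule K ↥m ↥m).toSubmodule]
      rw [LinearMap.mem_ker, map_sub]
      rw [show Submodule.mkQ (D : LieSubmodule K ↥m ↥m).toSubmodule = q from rfl]
      rw [hyx, sub_self]
    have : x = y + (x - y) := by abel
    rw [this]
    exact Submodule.add_mem _ (Submodule.mem_sup_left hy) (Submodule.mem_sup_right hker)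
  refine ⟨T1.image Subtype.val, ?_, ?_⟩
  · rw [Finset.coe_image]
    rintro z ⟨y, _, rfl⟩
    exact y.2
  · intro z hz
    have hx := hmemsup ⟨z, hz⟩
    have hmap := Submodule.mem_map_of_mem (f := (m : Submodule K L).subtype) hx
    rw [Submodule.map_sup] at hmap
    have h1 : Submodule.map (m : Submodule K L).subtype (Submodule.span K (T1 : Set ↥m))
        = Submodule.span K ((T1.image Subtype.val : Finset L) : Set L) := by
      rw [Submodule.map_span]
      congr 1
      simp only [Finset.coe_image]
      rfl
    have h2 : Submodule.map (m : Submodule K L).subtype D.toSubmodule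
        ≤ Submodule.span K {z : L | ∃ u ∈ m, ∃ v ∈ m, ⁅u, v⁆ = z} := by
      have hDspan : (D.toSubmodule : Submodule K ↥m)
          = Submodule.span K {w : ↥m | ∃ x ∈ (⊤ : LieIdeal K ↥m), ∃ n ∈ (⊤ : LieIdeal K ↥m),
              ⁅x, n⁆ = w} := by
        rw [hD, LieAlgebra.derivedSeries_def, LieAlgebra.derivedSeriesOfIdeal_succ,
          LieAlgebra.derivedSeriesOfIdeal_zero]
        exact LieSubmodule.lieIdeal_oper_eq_linear_span' ..
      rw [hDspan, Submodule.map_span]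
      refine Submodule.span_mono ?_
      rintro w ⟨w', ⟨x, -, n, -, rfl⟩, rfl⟩
      exact ⟨(x : L), x.2, (n : L), n.2, rfl⟩
    rw [h1] at hmap
    rcases Submodule.mem_sup.mp hmap with ⟨a, ha, c, hc, rfl⟩
    exact Submodule.add_mem _ (Submodule.mem_sup_left ha) (Submodule.mem_sup_right (h2 hc))

end WNprime
section Final

variable {K L : Type*} [Field K] [LieRing L] [LieAlgebra K L]

namespace StrNoeth

variable {n : ℕ} {gr : (Fin n → ℤ) → Submodule K L}

/-- The set of multi-indices vanishing in coordinates `≥ k`. -/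
def SS (n k : ℕ) : Set (Fin n → ℤ) := {m | ∀ i : Fin n, k ≤ (i : ℕ) → m i = 0}

lemma main_induction
    (hinternal : DirectSum.IsInternal gr)
    (hbracket : ∀ a b : Fin n → ℤ, ∀ x ∈ gr a, ∀ y ∈ gr b, ⁅x, y⁆ ∈ gr (a + b))
    (hfd : ∀ a : Fin n → ℤ, FiniteDimensional K (gr a))
    (hWN' : ∀ m : LieSubalgebra K L, ∃ T : Finset L, (↑T : Set L) ⊆ (m : Set L) ∧
      (m : Submodule K L) ≤ Submodule.span K (↑T : Set L) ⊔
        Submodule.span K {z : L | ∃ u ∈ m, ∃ v ∈ m, ⁅u, v⁆ = z}) :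
    ∀ k : ℕ, ∀ b : LieSubalgebra K L, (b : Submodule K L) ≤ MM gr (SS n k) →
      ∃ S : Set L, S.Finite ∧ S ⊆ b ∧ LieSubalgebra.lieSpan K L S = b := by
  intro k
  induction k with
  | zero =>
    intro b hb
    have hle : MM gr (SS n 0) ≤ gr 0 := by
      rw [MM]
      exact iSup₂_le fun m hm =>
        le_of_eq (congrArg gr (funext fun i => hm i (Nat.zero_le _)))
    have hble : (b : Submodule K L) ≤ gr 0 := le_trans hb hle
    haveI := hfd 0
    haveI : FiniteDimensional K (b : Submodule K L) :=
      Submodule.finiteDimensional_of_le hble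
    have hfg : (b : Submodule K L).FG :=
      (Submodule.fg_iff_finiteDimensional _).mpr this
    obtain ⟨T, hT⟩ := hfg
    refine ⟨↑T, T.finite_toSet, ?_, ?_⟩
    · intro x hx
      have : x ∈ Submodule.span K (↑T : Set L) := Submodule.subset_span hx
      rw [hT] at this
      exact this
    · refine le_antisymm (LieSubalgebra.lieSpan_le.mpr ?_) ?_
      · intro x hx
        have : x ∈ Submodule.span K (↑T : Set L) := Submodule.subset_span hx
        rw [hT] at this
        exact this
      · intro x hx
        have hx' : x ∈ Submodule.span K (↑T : Set L) := by rw [hT]; exact hx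
        exact LieSubalgebra.submodule_span_le_lieSpan hx'
  | succ k ih =>
    intro b hb
    by_cases hk : n ≤ k
    · refine ih b (le_trans hb (MM_mono fun m hm i hi => ?_))
      exact absurd (lt_of_lt_of_le i.isLt hk) (not_lt.mpr hi)
    · have hkn : k < n := lt_of_not_ge hk
      set idx : Fin n := ⟨k, hkn⟩ with hidx
      set lam : (Fin n → ℤ) →+ ℤ := Pi.evalAddMonoidHom (fun _ : Fin n => ℤ) idx with hlam
      obtain ⟨X₁, hX₁sub, hred₁⟩ := main_pos hinternal hbracket lam hWN' b
      set b0 : LieSubalgebra K L :=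
        { toSubmodule := (b : Submodule K L) ⊓ MM gr (Fle lam 0)
          lie_mem' := fun hx hy =>
            ⟨b.lie_mem hx.1 hy.1,
              lie_mem_MM hinternal hbracket hx.2 hy.2 (fun a ha b' hb' => by
                show lam (a + b') ≤ 0
                rw [map_add]
                exact add_nonpos ha hb')⟩ } with hb0
      obtain ⟨X₂, hX₂sub, hred₂⟩ := main_pos hinternal hbracket (-lam) hWN' b0
      set bz : LieSubalgebra K L :=
        { toSubmodule := (b : Submodule K L) ⊓ MM gr {m | lam m = 0}
          lie_mem' := fun hx hy =>
            ⟨b.lie_mem hx.1 hy.1,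
              lie_mem_MM hinternal hbracket hx.2 hy.2 (fun a ha b' hb' => by
                show lam (a + b') = 0
                rw [map_add]
                have ha' : lam a = 0 := ha
                have hb'' : lam b' = 0 := hb'
                rw [ha', hb'', add_zero])⟩ } with hbz
      have hbz_le : (bz : Submodule K L) ≤ MM gr (SS n k) := by
        rintro x ⟨hxb, hxM⟩
        have h1 : x ∈ MM gr (SS n (k + 1)) := hb hxb
        have h2 := mem_MM_inter hinternal h1 hxM
        refine MM_mono ?_ h2
        rintro m ⟨hm1, hm2⟩ i hi
        by_cases hik : (i : ℕ) = k
        · have hieq : i = idx := Fin.ext hik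
          rw [hieq]
          exact hm2
        · exact hm1 i (by omega)
      obtain ⟨S₀, hS₀fin, hS₀sub, hS₀span⟩ := ih bz hbz_le
      refine ⟨↑X₁ ∪ ↑X₂ ∪ S₀, (X₁.finite_toSet.union X₂.finite_toSet).union hS₀fin, ?_, ?_⟩
      · intro x hx
        rcases hx with (hx | hx) | hx
        · exact hX₁sub hx
        · exact ((hX₂sub hx : x ∈ b0)).1
        · exact (hS₀sub hx : x ∈ bz).1
      · have hsub1 : (↑X₁ : Set L) ⊆ ↑X₁ ∪ ↑X₂ ∪ S₀ := by
          intro x hx; exact Or.inl (Or.inl hx)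
        have hsub2 : (↑X₂ : Set L) ⊆ ↑X₁ ∪ ↑X₂ ∪ S₀ := by
          intro x hx; exact Or.inl (Or.inr hx)
        have hsub3 : S₀ ⊆ ↑X₁ ∪ ↑X₂ ∪ S₀ := by
          intro x hx; exact Or.inr hx
        refine le_antisymm (LieSubalgebra.lieSpan_le.mpr ?_) ?_
        · intro x hx
          rcases hx with (hx | hx) | hx
          · exact hX₁sub hx
          · exact ((hX₂sub hx : x ∈ b0)).1
          · exact (hS₀sub hx : x ∈ bz).1
        · intro x hx
          obtain ⟨z₁, hz₁, hxz₁⟩ := hred₁ x hx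
          have hz₁b0 : z₁ ∈ b0 := hz₁
          obtain ⟨z₂, hz₂, hz₁z₂⟩ := hred₂ z₁ hz₁b0
          have hz₂bz : z₂ ∈ bz := by
            obtain ⟨hz₂b0, hz₂M⟩ := hz₂
            have hz₂b0' : z₂ ∈ b0 := hz₂b0
            refine ⟨hz₂b0'.1, ?_⟩
            have hcap := mem_MM_inter hinternal hz₂b0'.2 hz₂M
            refine MM_mono ?_ hcap
            rintro m ⟨hm1, hm2⟩
            have hm1' : lam m ≤ 0 := hm1
            have hm2' : (-lam) m ≤ 0 := hm2
            rw [AddMonoidHom.neg_apply] at hm2'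
            show lam m = 0
            omega
          have hrw : x = (x - z₁) + (z₁ - z₂) + z₂ := by abel
          rw [hrw]
          have hm1 : x - z₁ ∈ LieSubalgebra.lieSpan K L (↑X₁ ∪ ↑X₂ ∪ S₀) :=
            LieSubalgebra.lieSpan_mono hsub1 hxz₁
          have hm2 : z₁ - z₂ ∈ LieSubalgebra.lieSpan K L (↑X₁ ∪ ↑X₂ ∪ S₀) :=
            LieSubalgebra.lieSpan_mono hsub2 hz₁z₂
          have hm3 : z₂ ∈ LieSubalgebra.lieSpan K L (↑X₁ ∪ ↑X₂ ∪ S₀) := by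
            refine LieSubalgebra.lieSpan_mono hsub3 ?_
            rw [hS₀span]
            exact hz₂bz
          exact LieSubalgebra.add_mem _ (LieSubalgebra.add_mem _ hm1 hm2) hm3

end StrNoeth

end Final

/-- A weakly Noetherian ℤⁿ-graded Lie algebra (grading an internal direct
sum of finite-dimensional homogeneous components, compatible with the bracket) is strongly
Noetherian: each of its Lie subalgebras is generated by a finite subset. -/
theorem weaklyNoetherian_graded_strongly_noetherian
    (K L : Type*) [Field K] [CharZero K] [LieRing L] [LieAlgebra K L]
    (n : ℕ) (hn : 1 ≤ n)
    (gr : (Fin n → ℤ) → Submodule K L)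
    (hinternal : DirectSum.IsInternal gr)
    (hbracket : ∀ a b : Fin n → ℤ, ∀ x ∈ gr a, ∀ y ∈ gr b, ⁅x, y⁆ ∈ gr (a + b))
    (hfd : ∀ a : Fin n → ℤ, FiniteDimensional K (gr a))
    (hWN : WeaklyNoetherian K L) :
    ∀ b : LieSubalgebra K L, ∃ S : Set L, S.Finite ∧ S ⊆ b ∧
      LieSubalgebra.lieSpan K L S = b := by
  intro b
  have hWN' := wn'_aux hWN
  refine StrNoeth.main_induction hinternal hbracket hfd hWN' n b ?_
  intro x _
  have huniv : (Set.univ : Set (Fin n → ℤ)) ⊆ StrNoeth.SS n n := by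
    intro m _
    intro i hi
    exact absurd i.isLt (not_lt.mpr hi)
  exact StrNoeth.MM_mono huniv (StrNoeth.mem_MM_univ hinternal x)
end
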